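/- arXiv:0908.4519 — 2 statements merged into one kernel-verified Lean document; each statement's English description precedes it below -/
import Mathlib

section
/- Let F be a field, m ≥ 1 an integer, S an upper triangular matrix as below, and F_k ∈ 𝔉(S,m), k = 1,2,…, a sequence of polynomial systems with iterated polynomials F_i^{(k)} = X_i·G̃_{k,i} + H̃_{k,i} where G̃_{k,i}, H̃_{k,i} ∈ F[X_{i+1},…,X_m]. Set d_{k,i} = 1 + deg G̃_{k,i} for i = 0,…,m. Then for every k ≥ 1 the column vector (d_{k,0},…,d_{k,m})^T equals S^k·(1,…,1)^T. -/
open MvPolynomial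

/-- Membership of a polynomial system `F = (F_0, …, F_m)` over `R` in the class `𝔉(S,m)`,
where `s i j` records the entries of the upper triangular matrix `S` (for `i < j`). -/
def IsFSystem {R : Type*} [CommRing R] (m : ℕ) (s : ℕ → ℕ → ℕ)
    (F : Fin (m + 1) → MvPolynomial (Fin (m + 1)) R) : Prop :=
  (∃ g h : R, g ≠ 0 ∧
      F (Fin.last m) = MvPolynomial.C g * MvPolynomial.X (Fin.last m) + MvPolynomial.C h) ∧
  ∀ i : Fin (m + 1), (i : ℕ) < m →
    ∃ (G H Gt : MvPolynomial (Fin (m + 1)) R) (g : R),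
      g ≠ 0 ∧
      F i = MvPolynomial.X i * G + H ∧
      (∀ d ∈ G.support, ∀ j : Fin (m + 1), j ≤ i → d j = 0) ∧
      (∀ d ∈ H.support, ∀ j : Fin (m + 1), j ≤ i → d j = 0) ∧
      G = MvPolynomial.C g *
          (∏ j ∈ Finset.univ.filter (fun j : Fin (m + 1) => i < j),
            MvPolynomial.X j ^ s i.val j.val) + Gt ∧
      (∀ d ∈ Gt.support, ∀ j : Fin (m + 1), i < j → d j < s i.val j.val) ∧
      (∀ d ∈ H.support, ∀ j : Fin (m + 1), i < j → d j ≤ s i.val j.val)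

/-- The iterated polynomials `F_i^{(k)}` of a sequence of polynomial systems:
`F_i^{(0)} = X_i` and `F_i^{(k)} = F_{k,i}(F_0^{(k-1)}, …, F_m^{(k-1)})`. -/
noncomputable def iterSys {R : Type*} [CommRing R] (m : ℕ)
    (Fs : ℕ → Fin (m + 1) → MvPolynomial (Fin (m + 1)) R) :
    ℕ → Fin (m + 1) → MvPolynomial (Fin (m + 1)) R
  | 0 => fun i => MvPolynomial.X i
  | k + 1 => fun i => MvPolynomial.bind₁ (iterSys m Fs k) (Fs (k + 1) i)

/-- The additive character `e_p(z) = exp(2πiz/p)` evaluated at an element of `F_p`. -/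
noncomputable def eP (p : ℕ) (x : ZMod p) : ℂ :=
  Complex.exp (2 * Real.pi * Complex.I * (x.val : ℂ) / (p : ℂ))

/-- `e_M(z) = exp(2πiz/M)` for a natural number `z`. -/
noncomputable def eM (M z : ℕ) : ℂ :=
  Complex.exp (2 * Real.pi * Complex.I * (z : ℂ) / (M : ℂ))

/-- The discrepancy of the first `N` points of a sequence in `[0,1)^s`: the supremum over
boxes `B = [a_1,b_1) × ⋯ × [a_s,b_s) ⊆ [0,1)^s` of `|T(B)/N - vol B|`. -/
noncomputable def discrepancy (s N : ℕ) (P : ℕ → Fin s → ℝ) : ℝ :=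
  sSup {D : ℝ | ∃ a b : Fin s → ℝ,
    (∀ j, 0 ≤ a j ∧ a j ≤ b j ∧ b j ≤ 1) ∧
    D = |(((Finset.range N).filter fun n => ∀ j, a j ≤ P n j ∧ P n j < b j).card : ℝ) / N -
        ∏ j, (b j - a j)|}

/-- The matrix `S` associated with the data `s i j`. -/
def Smat (m : ℕ) (s : ℕ → ℕ → ℕ) : Matrix (Fin (m + 1)) (Fin (m + 1)) ℕ :=
  fun i j => if i = j then 1 else if i < j then s i.val j.val else 0


namespace Stmt1Aux

variable {σ : Type*} {R : Type*}

section ToUni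
variable [CommSemiring R]

/-- The ring hom sending `X j ↦ (X j) • T`, used to read off total degrees. -/
noncomputable def toUni : MvPolynomial σ R →+* Polynomial (MvPolynomial σ R) :=
  eval₂Hom (Polynomial.C.comp (C : R →+* MvPolynomial σ R))
    (fun j => Polynomial.C (X j) * Polynomial.X)

lemma toUni_monomial (d : σ →₀ ℕ) (c : R) :
    toUni (monomial d c) =
      Polynomial.monomial (d.sum fun _ n => n) (monomial d c) := by
  classical
  rw [← Polynomial.C_mul_X_pow_eq_monomial]
  rw [monomial_eq]
  simp only [toUni, map_mul, eval₂Hom_C, RingHom.comp_apply]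
  rw [Finsupp.prod, map_prod]
  simp only [map_pow, eval₂Hom_X']
  rw [Finset.prod_congr rfl (fun j _ => mul_pow (Polynomial.C (X j)) Polynomial.X (d j))]
  rw [Finset.prod_mul_distrib, Finset.prod_pow_eq_pow_sum, Finsupp.sum, map_prod]
  simp only [map_pow]
  ring

lemma toUni_p (p : MvPolynomial σ R) :
    toUni p = ∑ d ∈ p.support,
      Polynomial.monomial (d.sum fun _ n => n) (monomial d (coeff d p)) := by
  conv_lhs => rw [p.as_sum, map_sum]
  exact Finset.sum_congr rfl fun d _ => toUni_monomial d _

lemma coeff_toUni_totalDegree (p : MvPolynomial σ R) (hp : p ≠ 0) :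
    (toUni p).coeff p.totalDegree ≠ 0 := by
  classical
  obtain ⟨d₀, hd₀, hdeg⟩ : ∃ d₀ ∈ p.support, p.totalDegree = d₀.sum fun _ n => n :=
    Finset.exists_mem_eq_sup _ (MvPolynomial.support_nonempty.mpr hp) _
  rw [toUni_p]
  rw [Polynomial.finset_sum_coeff]
  simp only [Polynomial.coeff_monomial]
  intro h
  have := congrArg (coeff d₀) h
  rw [coeff_zero, coeff_sum] at this
  rw [Finset.sum_eq_single d₀] at this
  · rw [if_pos hdeg.symm, coeff_monomial, if_pos rfl] at this
    exact (mem_support_iff.mp hd₀) this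
  · intro b _ hb
    split
    · rw [coeff_monomial, if_neg hb]
    · exact coeff_zero d₀
  · intro h0; exact absurd hd₀ h0

lemma natDegree_toUni (p : MvPolynomial σ R) (hp : p ≠ 0) :
    (toUni p).natDegree = p.totalDegree ∧ toUni p ≠ 0 := by
  have h1 : (toUni p).coeff p.totalDegree ≠ 0 := coeff_toUni_totalDegree p hp
  have hne : toUni p ≠ 0 := fun h => h1 (by rw [h, Polynomial.coeff_zero])
  refine ⟨le_antisymm ?_ (Polynomial.le_natDegree_of_ne_zero h1), hne⟩
  rw [toUni_p]
  refine (Polynomial.natDegree_sum_le _ _).trans ?_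
  rw [Finset.fold_max_le]
  refine ⟨Nat.zero_le _, fun d hd => ?_⟩
  refine (Polynomial.natDegree_monomial_le _).trans ?_
  exact le_totalDegree hd

end ToUni

section Domain
variable [CommRing R] [IsDomain R]

lemma totalDegree_mul_eq {p q : MvPolynomial σ R} (hp : p ≠ 0) (hq : q ≠ 0) :
    (p * q).totalDegree = p.totalDegree + q.totalDegree := by
  obtain ⟨hdp, hnp⟩ := natDegree_toUni p hp
  obtain ⟨hdq, hnq⟩ := natDegree_toUni q hq
  obtain ⟨hdpq, -⟩ := natDegree_toUni (p * q) (mul_ne_zero hp hq)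
  rw [← hdp, ← hdq, ← hdpq, map_mul, Polynomial.natDegree_mul hnp hnq]

lemma totalDegree_pow_eq {p : MvPolynomial σ R} (hp : p ≠ 0) (n : ℕ) :
    (p ^ n).totalDegree = n * p.totalDegree := by
  induction n with
  | zero => simp
  | succ n ih =>
    rw [pow_succ, totalDegree_mul_eq (pow_ne_zero _ hp) hp, ih]
    ring

lemma totalDegree_prod_eq {ι : Type*} (t : Finset ι) (f : ι → MvPolynomial σ R)
    (hf : ∀ j ∈ t, f j ≠ 0) :
    (∏ j ∈ t, f j).totalDegree = ∑ j ∈ t, (f j).totalDegree := by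
  classical
  induction t using Finset.induction with
  | empty => simp
  | insert a t' hx ih =>
    rw [Finset.prod_insert hx, Finset.sum_insert hx,
      totalDegree_mul_eq (hf a (Finset.mem_insert_self a t'))
        (Finset.prod_ne_zero_iff.mpr fun j hj => hf j (Finset.mem_insert_of_mem hj)),
      ih fun j hj => hf j (Finset.mem_insert_of_mem hj)]

end Domain

end Stmt1Aux

namespace Stmt1Aux

section SupportLemmas
variable {σ : Type*} [LinearOrder σ] {R : Type*} [CommRing R]

/-- all variables of `p` are `> i` -/
def Avd (i : σ) (p : MvPolynomial σ R) : Prop := ∀ l ∈ p.vars, i < l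

lemma avd_iff {i : σ} {p : MvPolynomial σ R} :
    Avd i p ↔ ∀ d ∈ p.support, ∀ j, j ≤ i → d j = 0 := by
  constructor
  · intro h d hd j hj
    by_contra hc
    exact absurd (h j ((mem_vars j).mpr ⟨d, hd, Finsupp.mem_support_iff.mpr hc⟩)) (not_lt.mpr hj)
  · intro h l hl
    obtain ⟨d, hd, hld⟩ := (mem_vars l).mp hl
    by_contra hc
    exact Finsupp.mem_support_iff.mp hld (h d hd l (not_lt.mp hc))

lemma Avd.coeff_i_ne {i : σ} {p : MvPolynomial σ R} (h : Avd i p)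
    {d : σ →₀ ℕ} (hd : d ∈ p.support) : d i = 0 :=
  avd_iff.mp h d hd i le_rfl

lemma Avd.mul {i : σ} {p q : MvPolynomial σ R} (hp : Avd i p) (hq : Avd i q) :
    Avd i (p * q) := by
  classical
  intro l hl
  rcases Finset.mem_union.mp (vars_mul p q hl) with h | h
  exacts [hp l h, hq l h]

lemma Avd.add {i : σ} {p q : MvPolynomial σ R} (hp : Avd i p) (hq : Avd i q) :
    Avd i (p + q) := by
  classical
  intro l hl
  rcases Finset.mem_union.mp (vars_add_subset p q hl) with h | h
  exacts [hp l h, hq l h]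

lemma Avd.C {i : σ} (c : R) : Avd i (MvPolynomial.C c : MvPolynomial σ R) := by
  intro l hl; rw [vars_C] at hl; exact absurd hl (Finset.notMem_empty l)

lemma Avd.bind₁ {i : σ} {p : MvPolynomial σ R} {f : σ → MvPolynomial σ R}
    (hp : Avd i p) (hf : ∀ j, i < j → Avd i (f j)) :
    Avd i (MvPolynomial.bind₁ f p) := by
  classical
  intro l hl
  obtain ⟨j, hj, hlj⟩ := Finset.mem_biUnion.mp (vars_bind₁ f p hl)
  exact hf j (hp j hj) l hlj

/-- uniqueness of the decomposition `X i * A + B` -/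
lemma decomp_unique {i : σ} {A B A' B' : MvPolynomial σ R}
    (hA : ∀ d ∈ A.support, d i = 0) (hA' : ∀ d ∈ A'.support, d i = 0)
    (hB : ∀ d ∈ B.support, d i = 0) (hB' : ∀ d ∈ B'.support, d i = 0)
    (h : X i * A + B = X i * A' + B') : A = A' ∧ B = B' := by
  classical
  have key : ∀ (P : MvPolynomial σ R), (∀ d ∈ P.support, d i = 0) →
      ∀ e : σ →₀ ℕ, e i ≠ 0 → coeff e P = 0 := by
    intro P hP e he
    by_contra hc
    exact he (hP e (mem_support_iff.mpr hc))
  have hAA : A = A' := by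
    ext d
    by_cases hdi : d i = 0
    · have := congrArg (coeff (Finsupp.single i 1 + d)) h
      rw [coeff_add, coeff_add, coeff_X_mul, coeff_X_mul,
        key B hB _ (by simp), key B' hB' _ (by simp)] at this
      simpa using this
    · rw [key A hA d hdi, key A' hA' d hdi]
  refine ⟨hAA, ?_⟩
  rw [hAA] at h
  exact add_left_cancel h

end SupportLemmas

end Stmt1Aux

namespace Stmt1Aux

section DegreeLemmas
variable {σ : Type*} {R : Type*} [CommRing R] [IsDomain R]

lemma add_deg_lt {p q : MvPolynomial σ R} (hp : p ≠ 0)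
    (hq : q.totalDegree < p.totalDegree ∨ q = 0) :
    (p + q).totalDegree = p.totalDegree ∧ p + q ≠ 0 := by
  rcases hq with hq | rfl
  · refine ⟨totalDegree_add_eq_left_of_totalDegree_lt hq, fun h => ?_⟩
    have : p = -q := by linear_combination h
    rw [this, totalDegree_neg] at hq
    exact lt_irrefl _ hq
  · rw [add_zero]
    exact ⟨rfl, hp⟩

lemma totalDegree_bind₁_le {f : σ → MvPolynomial σ R} {p : MvPolynomial σ R} {D : σ → ℕ}
    (hf : ∀ j, (f j).totalDegree ≤ D j) {N : ℕ}
    (hp : ∀ d ∈ p.support, (d.sum fun j e => e * D j) ≤ N) :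
    (MvPolynomial.bind₁ f p).totalDegree ≤ N := by
  classical
  conv_lhs => rw [p.as_sum, map_sum]
  refine (totalDegree_finset_sum _ _).trans (Finset.sup_le fun d hd => ?_)
  rw [bind₁_monomial]
  refine (totalDegree_mul _ _).trans ?_
  rw [totalDegree_C, zero_add]
  refine (totalDegree_finset_prod _ _).trans ?_
  refine le_trans ?_ (hp d hd)
  rw [Finsupp.sum]
  exact Finset.sum_le_sum fun j _ =>
    (totalDegree_pow _ _).trans (Nat.mul_le_mul_left _ (hf j))

/-- exact degree of `C g * ∏ f j ^ e j` -/
lemma deg_C_mul_prod {g : R} (hg : g ≠ 0) {ι : Type*} (T : Finset ι)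
    (f : ι → MvPolynomial σ R) (hf : ∀ j ∈ T, f j ≠ 0) (e : ι → ℕ) :
    (MvPolynomial.C g * ∏ j ∈ T, f j ^ e j).totalDegree
      = ∑ j ∈ T, e j * (f j).totalDegree ∧
    MvPolynomial.C g * ∏ j ∈ T, f j ^ e j ≠ 0 := by
  have hprodne : (∏ j ∈ T, f j ^ e j) ≠ 0 :=
    Finset.prod_ne_zero_iff.mpr fun j hj => pow_ne_zero _ (hf j hj)
  have hCne : (MvPolynomial.C g : MvPolynomial σ R) ≠ 0 := by
    simpa using hg
  refine ⟨?_, mul_ne_zero hCne hprodne⟩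
  rw [totalDegree_mul_eq hCne hprodne, totalDegree_C, zero_add,
    totalDegree_prod_eq T _ fun j hj => pow_ne_zero _ (hf j hj)]
  exact Finset.sum_congr rfl fun j hj => totalDegree_pow_eq (hf j hj) _

lemma deg_X_mul_add [Nontrivial R] {i : σ} {A B : MvPolynomial σ R} {M : ℕ} (hA : A ≠ 0)
    (hdA : 1 + A.totalDegree = M) (hdB : B.totalDegree ≤ M)
    (hB : ∀ d ∈ B.support, d i = 0) :
    (X i * A + B).totalDegree = M ∧ X i * A + B ≠ 0 := by
  classical
  have hXA : (X i * A).totalDegree ≤ M := by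
    refine (totalDegree_mul _ _).trans ?_
    rw [totalDegree_X]
    omega
  obtain ⟨d₀, hd₀, hdeg⟩ : ∃ d₀ ∈ A.support, A.totalDegree = d₀.sum fun _ n => n :=
    Finset.exists_mem_eq_sup _ (MvPolynomial.support_nonempty.mpr hA) _
  have hcoeff : coeff (Finsupp.single i 1 + d₀) (X i * A + B) = coeff d₀ A := by
    rw [coeff_add, coeff_X_mul]
    have : coeff (Finsupp.single i 1 + d₀) B = 0 := by
      by_contra hc
      have := hB _ (mem_support_iff.mpr hc)
      simp at this
    rw [this, add_zero]
  have hmem : (Finsupp.single i 1 + d₀) ∈ (X i * A + B).support := by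
    rw [mem_support_iff, hcoeff]
    exact mem_support_iff.mp hd₀
  have hsum : ((Finsupp.single i 1 + d₀).sum fun _ n => n) = M := by
    rw [Finsupp.sum_add_index' (fun _ => rfl) (fun _ _ _ => rfl)]
    rw [Finsupp.sum_single_index rfl]
    omega
  constructor
  · refine le_antisymm ((totalDegree_add _ _).trans (max_le hXA hdB)) ?_
    calc M = (Finsupp.single i 1 + d₀).sum fun _ n => n := hsum.symm
    _ ≤ _ := le_totalDegree hmem
  · intro h
    rw [h] at hmem
    simp at hmem

end DegreeLemmas

end Stmt1Aux

namespace Stmt1Aux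

section MoreAvd
variable {σ : Type*} [LinearOrder σ] {R : Type*} [CommRing R]

lemma Avd.mono {i i' : σ} {p : MvPolynomial σ R} (h : i' ≤ i) (hp : Avd i p) :
    Avd i' p := fun l hl => lt_of_le_of_lt h (hp l hl)

lemma Avd.X [Nontrivial R] {i j : σ} (h : i < j) : Avd i (MvPolynomial.X j : MvPolynomial σ R) := by
  intro l hl
  rw [vars_X, Finset.mem_singleton] at hl
  exact hl ▸ h

lemma Avd.sub {i : σ} {p q : MvPolynomial σ R} (hp : Avd i p) (hq : Avd i q) :
    Avd i (p - q) := by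
  classical
  intro l hl
  rcases Finset.mem_union.mp (vars_sub_subset (p := p) (q := q) hl) with h | h
  exacts [hp l h, hq l h]

lemma Avd.prodXpow [Nontrivial R] {i : σ} {ι : Type*} {T : Finset ι} {u : ι → σ}
    (hu : ∀ j ∈ T, i < u j) (e : ι → ℕ) :
    Avd i (∏ j ∈ T, (MvPolynomial.X (u j) : MvPolynomial σ R) ^ e j) := by
  classical
  intro l hl
  obtain ⟨j, hj, hlj⟩ := Finset.mem_biUnion.mp (vars_prod _ hl)
  have := vars_pow _ _ hlj
  rw [vars_X, Finset.mem_singleton] at this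
  exact this ▸ hu j hj

end MoreAvd

end Stmt1Aux



namespace Stmt1Aux

section Mat
variable {m : ℕ} {s : ℕ → ℕ → ℕ}

/-- `D_k := S^k · (1,…,1)` -/
def Dv (m : ℕ) (s : ℕ → ℕ → ℕ) (k : ℕ) : Fin (m + 1) → ℕ :=
  ((Smat m s) ^ k).mulVec (fun _ => 1)

lemma Dv_zero (i : Fin (m + 1)) : Dv m s 0 i = 1 := by
  rw [Dv, pow_zero, Matrix.one_mulVec]

lemma smat_mulVec (v : Fin (m + 1) → ℕ) (i : Fin (m + 1)) :
    (Smat m s).mulVec v i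
      = v i + ∑ j ∈ Finset.univ.filter (fun j : Fin (m + 1) => i < j), s i.val j.val * v j := by
  classical
  rw [Matrix.mulVec]
  show ∑ j, Smat m s i j * v j = _
  rw [← Finset.sum_filter_add_sum_filter_not Finset.univ (fun j : Fin (m + 1) => i < j)]
  rw [add_comm]
  congr 1
  · rw [Finset.sum_eq_single i]
    · simp [Smat]
    · intro j hj hne
      rw [Finset.mem_filter] at hj
      have : ¬ i = j := fun h => hne h.symm
      simp [Smat, this, hj.2]
    · intro h
      exact absurd (Finset.mem_filter.mpr ⟨Finset.mem_univ i, lt_irrefl i⟩) h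
  · refine Finset.sum_congr rfl fun j hj => ?_
    rw [Finset.mem_filter] at hj
    have : ¬ i = j := ne_of_lt hj.2
    simp [Smat, this, hj.2]

lemma Dv_succ (k : ℕ) (i : Fin (m + 1)) :
    Dv m s (k + 1) i
      = Dv m s k i + ∑ j ∈ Finset.univ.filter (fun j : Fin (m + 1) => i < j),
          s i.val j.val * Dv m s k j := by
  have : Dv m s (k + 1) = (Smat m s).mulVec (Dv m s k) := by
    rw [Dv, Dv, pow_succ', ← Matrix.mulVec_mulVec]
  rw [this, smat_mulVec]

lemma Dv_pos (k : ℕ) (i : Fin (m + 1)) : 1 ≤ Dv m s k i := by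
  induction k with
  | zero => rw [Dv_zero]
  | succ k ih => rw [Dv_succ]; exact le_add_right (ih)

lemma Dv_last (k : ℕ) : Dv m s k (Fin.last m) = 1 := by
  induction k with
  | zero => exact Dv_zero _
  | succ k ih =>
    rw [Dv_succ, ih]
    have : Finset.univ.filter (fun j : Fin (m + 1) => Fin.last m < j) = ∅ := by
      refine Finset.filter_false_of_mem fun j _ => not_lt.mpr (Fin.le_last j)
    simp [this]


end Mat

end Stmt1Aux

namespace Stmt1Aux

section Step
variable {K : Type*} [Field K] {m : ℕ} {s : ℕ → ℕ → ℕ}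

lemma step {F f A B A' B' : Fin (m + 1) → MvPolynomial (Fin (m + 1)) K}
    {D : Fin (m + 1) → ℕ}
    (hFsys : IsFSystem m s F)
    (hf : ∀ i, f i = X i * A i + B i)
    (hA0 : ∀ i, Avd i (A i)) (hB0 : ∀ i, Avd i (B i))
    (hAne : ∀ i, A i ≠ 0)
    (hAdeg : ∀ i, 1 + (A i).totalDegree = D i)
    (hBdeg : ∀ i, (B i).totalDegree ≤ D i)
    (hDlast : D (Fin.last m) = 1)
    (hdec : ∀ i, MvPolynomial.bind₁ f (F i) = X i * A' i + B' i)
    (hA'0 : ∀ i, ∀ d ∈ (A' i).support, d i = 0)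
    (hB'0 : ∀ i, ∀ d ∈ (B' i).support, d i = 0) :
    ∀ i, A' i ≠ 0 ∧ Avd i (A' i) ∧ Avd i (B' i) ∧
      (1 + (A' i).totalDegree
        = D i + ∑ j ∈ Finset.univ.filter (fun j : Fin (m + 1) => i < j),
            s i.val j.val * D j) ∧
      (B' i).totalDegree
        ≤ D i + ∑ j ∈ Finset.univ.filter (fun j : Fin (m + 1) => i < j),
            s i.val j.val * D j := by
  classical
  have hfd : ∀ j, (f j).totalDegree = D j ∧ f j ≠ 0 := fun j => by
    rw [hf j]
    exact deg_X_mul_add (hAne j) (hAdeg j) (hBdeg j)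
      (fun d hd => (hB0 j).coeff_i_ne hd)
  have hfv : ∀ (i' j : Fin (m + 1)), i' < j → Avd i' (f j) := fun i' j hij => by
    rw [hf j]
    exact ((Avd.X hij).mul ((hA0 j).mono hij.le)).add ((hB0 j).mono hij.le)
  intro i
  rcases eq_or_lt_of_le (Nat.lt_succ_iff.mp i.isLt) with hi | hi
  · -- case i = last
    have hilast : i = Fin.last m := Fin.ext hi
    subst hilast
    obtain ⟨g, h, hg, hFlast⟩ := hFsys.1
    have hCg : (MvPolynomial.C g : MvPolynomial (Fin (m + 1)) K) ≠ 0 := by simpa using hg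
    have hcomp : MvPolynomial.bind₁ f (F (Fin.last m))
        = X (Fin.last m) * (MvPolynomial.C g * A (Fin.last m))
          + (MvPolynomial.C g * B (Fin.last m) + MvPolynomial.C h) := by
      rw [hFlast, map_add, map_mul, bind₁_C_right, bind₁_C_right, bind₁_X_right,
        hf (Fin.last m)]
      ring
    have hAvdA'' : Avd (Fin.last m) (MvPolynomial.C g * A (Fin.last m)) :=
      (Avd.C g).mul (hA0 _)
    have hAvdB'' : Avd (Fin.last m)
        (MvPolynomial.C g * B (Fin.last m) + MvPolynomial.C h) :=
      ((Avd.C g).mul (hB0 _)).add (Avd.C h)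
    obtain ⟨hA'eq, hB'eq⟩ := decomp_unique (hA'0 _)
      (fun d hd => hAvdA''.coeff_i_ne hd) (hB'0 _)
      (fun d hd => hAvdB''.coeff_i_ne hd)
      ((hdec _).symm.trans hcomp)
    have hTempty : Finset.univ.filter (fun j : Fin (m + 1) => Fin.last m < j) = ∅ :=
      Finset.filter_false_of_mem fun j _ => not_lt.mpr (Fin.le_last j)
    rw [hTempty, Finset.sum_empty, add_zero, hA'eq, hB'eq]
    refine ⟨mul_ne_zero hCg (hAne _), hAvdA'', hAvdB'', ?_, ?_⟩
    · rw [totalDegree_mul_eq hCg (hAne _), totalDegree_C, zero_add]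
      exact hAdeg _
    · refine (totalDegree_add _ _).trans (max_le ?_ ?_)
      · exact (totalDegree_mul _ _).trans
          (by rw [totalDegree_C, zero_add]; exact hBdeg _)
      · rw [totalDegree_C]; exact Nat.zero_le _
  · -- case i < last
    obtain ⟨G, H, Gtl, g, hg, hFi, hGsupp, hHsupp, hGeq, hGtlb, hHb⟩ := hFsys.2 i hi
    have hCg : (MvPolynomial.C g : MvPolynomial (Fin (m + 1)) K) ≠ 0 := by simpa using hg
    set T := Finset.univ.filter (fun j : Fin (m + 1) => i < j) with hTdef
    have hiT : ∀ j ∈ T, i < j := fun j hj => (Finset.mem_filter.mp hj).2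
    have hlastT : Fin.last m ∈ T := by
      refine Finset.mem_filter.mpr ⟨Finset.mem_univ _, ?_⟩
      rw [Fin.lt_iff_val_lt_val, Fin.val_last]; exact hi
    set E := ∑ j ∈ T, s i.val j.val * D j with hEdef
    set GG := MvPolynomial.bind₁ f G with hGGdef
    set HH := MvPolynomial.bind₁ f H with hHHdef
    have hAvdG : Avd i G := avd_iff.mpr hGsupp
    have hAvdH : Avd i H := avd_iff.mpr hHsupp
    have hAvdGG : Avd i GG := hAvdG.bind₁ (fun j hj => hfv i j hj)
    have hAvdHH : Avd i HH := hAvdH.bind₁ (fun j hj => hfv i j hj)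
    have hcomp : MvPolynomial.bind₁ f (F i)
        = X i * (A i * GG) + (B i * GG + HH) := by
      rw [hFi, map_add, map_mul, bind₁_X_right, hf i, hGGdef, hHHdef]
      ring
    -- the leading product
    set P := MvPolynomial.C g * ∏ j ∈ T, f j ^ s i.val j.val with hPdef
    have hPd := deg_C_mul_prod hg T f (fun j _ => (hfd j).2) (fun j => s i.val j.val)
    have hPdeg : P.totalDegree = E := by
      rw [hPdef, hPd.1, hEdef]
      exact Finset.sum_congr rfl fun j _ => by rw [(hfd j).1]
    have hPne : P ≠ 0 := hPd.2
    set W := MvPolynomial.bind₁ f Gtl with hWdef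
    have hGG : GG = P + W := by
      rw [hGGdef, hGeq, map_add, map_mul, bind₁_C_right, map_prod, hWdef, hPdef]
      simp only [map_pow, bind₁_X_right]
    have hWor : W.totalDegree < P.totalDegree ∨ W = 0 := by
      by_cases hGtl0 : Gtl = 0
      · right; rw [hWdef, hGtl0, map_zero]
      · left
        obtain ⟨d₁, hd₁⟩ := MvPolynomial.support_nonempty.mpr hGtl0
        have hs1 : ∀ j ∈ T, 1 ≤ s i.val j.val := fun j hj =>
          Nat.lt_of_le_of_lt (Nat.zero_le _) (hGtlb d₁ hd₁ j (hiT j hj))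
        have hAvdGtl : Avd i Gtl := by
          have hGtlsub : Gtl = G - MvPolynomial.C g * ∏ j ∈ T, X j ^ s i.val j.val := by
            rw [hGeq]; ring
          rw [hGtlsub]
          exact hAvdG.sub ((Avd.C g).mul
            (Avd.prodXpow (u := fun j => j) hiT (fun j => s i.val j.val)))
        set N := ∑ j ∈ T, (s i.val j.val - 1) * D j with hNdef
        have hWle : W.totalDegree ≤ N := by
          refine totalDegree_bind₁_le (fun j => (hfd j).1.le) ?_
          intro d hd
          have hsub : d.support ⊆ T := by
            intro j hj
            refine Finset.mem_filter.mpr ⟨Finset.mem_univ _, ?_⟩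
            by_contra hc
            exact Finsupp.mem_support_iff.mp hj
              (avd_iff.mp hAvdGtl d hd j (not_lt.mp hc))
          rw [Finsupp.sum]
          calc ∑ j ∈ d.support, d j * D j ≤ ∑ j ∈ T, d j * D j :=
                Finset.sum_le_sum_of_subset hsub
          _ ≤ N := Finset.sum_le_sum fun j hj =>
                Nat.mul_le_mul_right _ (Nat.le_sub_one_of_lt (hGtlb d hd j (hiT j hj)))
        have hNE : N < E := by
          have hsplit : N + ∑ j ∈ T, D j = E := by
            rw [hNdef, hEdef, ← Finset.sum_add_distrib]
            refine Finset.sum_congr rfl fun j hj => ?_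
            rw [Nat.sub_one_mul, Nat.sub_add_cancel
              (Nat.le_mul_of_pos_left _ (hs1 j hj))]
          have hsum1 : 1 ≤ ∑ j ∈ T, D j := by
            have h1 := Finset.single_le_sum (f := D) (fun j _ => Nat.zero_le (D j)) hlastT
            omega
          omega
        rw [hPdeg]
        exact lt_of_le_of_lt hWle hNE
    have hGGd : GG.totalDegree = E ∧ GG ≠ 0 := by
      rw [hGG, ← hPdeg]
      exact add_deg_lt hPne hWor
    have hHHle : HH.totalDegree ≤ E := by
      refine totalDegree_bind₁_le (fun j => (hfd j).1.le) ?_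
      intro d hd
      have hsub : d.support ⊆ T := by
        intro j hj
        refine Finset.mem_filter.mpr ⟨Finset.mem_univ _, ?_⟩
        by_contra hc
        exact Finsupp.mem_support_iff.mp hj
          (avd_iff.mp hAvdH d hd j (not_lt.mp hc))
      rw [Finsupp.sum]
      calc ∑ j ∈ d.support, d j * D j ≤ ∑ j ∈ T, d j * D j :=
            Finset.sum_le_sum_of_subset hsub
      _ ≤ E := Finset.sum_le_sum fun j hj =>
            Nat.mul_le_mul_right _ (hHb d hd j (hiT j hj))
    -- uniqueness
    have hAvdA'' : Avd i (A i * GG) := (hA0 i).mul hAvdGG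
    have hAvdB'' : Avd i (B i * GG + HH) := ((hB0 i).mul hAvdGG).add hAvdHH
    obtain ⟨hA'eq, hB'eq⟩ := decomp_unique (hA'0 i)
      (fun d hd => hAvdA''.coeff_i_ne hd) (hB'0 i)
      (fun d hd => hAvdB''.coeff_i_ne hd)
      ((hdec i).symm.trans hcomp)
    rw [hA'eq, hB'eq]
    refine ⟨mul_ne_zero (hAne i) hGGd.2, hAvdA'', hAvdB'', ?_, ?_⟩
    · rw [totalDegree_mul_eq (hAne i) hGGd.2, hGGd.1, ← add_assoc, hAdeg i]
    · refine (totalDegree_add _ _).trans (max_le ?_ ?_)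
      · refine (totalDegree_mul _ _).trans ?_
        rw [hGGd.1]
        have := hAdeg i
        have := hBdeg i
        omega
      · exact hHHle.trans (Nat.le_add_left _ _)

end Step

end Stmt1Aux

theorem stmt1 {K : Type*} [Field K] (m : ℕ) (hm : 1 ≤ m) (s : ℕ → ℕ → ℕ)
    (Fs : ℕ → Fin (m + 1) → MvPolynomial (Fin (m + 1)) K)
    (hFs : ∀ k, 1 ≤ k → IsFSystem m s (Fs k))
    (Gt Ht : ℕ → Fin (m + 1) → MvPolynomial (Fin (m + 1)) K)
    (hdec : ∀ k, 1 ≤ k → ∀ i : Fin (m + 1),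
      iterSys m Fs k i = MvPolynomial.X i * Gt k i + Ht k i ∧
      (∀ d ∈ (Gt k i).support, ∀ j : Fin (m + 1), j ≤ i → d j = 0) ∧
      (∀ d ∈ (Ht k i).support, ∀ j : Fin (m + 1), j ≤ i → d j = 0)) :
    ∀ k, 1 ≤ k → ∀ i : Fin (m + 1),
      1 + (Gt k i).totalDegree = ((Smat m s) ^ k).mulVec (fun _ => 1) i := by
  classical
  open Stmt1Aux in
  have key : ∀ k, 1 ≤ k → ∀ i : Fin (m + 1),
      Gt k i ≠ 0 ∧ 1 + (Gt k i).totalDegree = Stmt1Aux.Dv m s k i ∧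
      (Ht k i).totalDegree ≤ Stmt1Aux.Dv m s k i := by
    intro k hk
    induction k, hk using Nat.le_induction with
    | base =>
      have hstep := Stmt1Aux.step (K := K) (m := m) (s := s)
        (F := Fs 1) (f := iterSys m Fs 0)
        (A := fun _ => 1) (B := fun _ => 0)
        (A' := Gt 1) (B' := Ht 1) (D := fun _ => 1)
        (hFs 1 le_rfl)
        (fun i => by show MvPolynomial.X i = _; rw [mul_one, add_zero])
        (fun i l hl => by rw [vars_one] at hl; exact absurd hl (Finset.notMem_empty l))
        (fun i l hl => by rw [vars_0] at hl; exact absurd hl (Finset.notMem_empty l))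
        (fun i => one_ne_zero)
        (fun i => by rw [totalDegree_one])
        (fun i => by rw [totalDegree_zero]; exact Nat.zero_le _)
        rfl
        (fun i => (hdec 1 le_rfl i).1)
        (fun i d hd => (hdec 1 le_rfl i).2.1 d hd i le_rfl)
        (fun i d hd => (hdec 1 le_rfl i).2.2 d hd i le_rfl)
      intro i
      obtain ⟨hne, -, -, hdeg, hble⟩ := hstep i
      have hDv : Stmt1Aux.Dv m s 1 i
          = 1 + ∑ j ∈ Finset.univ.filter (fun j : Fin (m + 1) => i < j),
              s i.val j.val * 1 := by
        rw [Stmt1Aux.Dv_succ 0 i, Stmt1Aux.Dv_zero]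
        congr 1
        exact Finset.sum_congr rfl fun j _ => by rw [Stmt1Aux.Dv_zero]
      exact ⟨hne, by rw [hDv]; exact hdeg, by rw [hDv]; exact hble⟩
    | succ k hk ih =>
      have hstep := Stmt1Aux.step (K := K) (m := m) (s := s)
        (F := Fs (k + 1)) (f := iterSys m Fs k)
        (A := Gt k) (B := Ht k)
        (A' := Gt (k + 1)) (B' := Ht (k + 1)) (D := Stmt1Aux.Dv m s k)
        (hFs (k + 1) (by omega))
        (fun i => (hdec k hk i).1)
        (fun i => Stmt1Aux.avd_iff.mpr (hdec k hk i).2.1)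
        (fun i => Stmt1Aux.avd_iff.mpr (hdec k hk i).2.2)
        (fun i => (ih i).1)
        (fun i => (ih i).2.1)
        (fun i => (ih i).2.2)
        (Stmt1Aux.Dv_last k)
        (fun i => (hdec (k + 1) (by omega) i).1)
        (fun i d hd => (hdec (k + 1) (by omega) i).2.1 d hd i le_rfl)
        (fun i d hd => (hdec (k + 1) (by omega) i).2.2 d hd i le_rfl)
      intro i
      obtain ⟨hne, -, -, hdeg, hble⟩ := hstep i
      rw [Stmt1Aux.Dv_succ k i]
      exact ⟨hne, hdeg, hble⟩
  intro k hk i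
  exact (key k hk i).2.1
end

section
/- Fix an integer m ≥ 1 and a matrix S as below. There exists a constant c₀ > 0 depending only on S and m such that the following holds. Let p be a prime and let 𝓕_k ∈ 𝔉(S,m), k = 1,2,…, be permutation polynomial systems (i.e. each map (w_0,…,w_m) ↦ (F_{k,0}(w),…,F_{k,m}(w)) is a bijection of F_p^{m+1}) with s_{0,1}·s_{1,2}⋯s_{m−1,m} ≠ 0, and let F_i^{(n)} be the iterated polynomials. Then for any positive integers c, M, N and any vector a = (a_0,…,a_{m−1}) ∈ F_p^m with a ≠ 0, U_{a,c}(M,N) ≤ c₀·A(N,p), where A(N,p) = N·p^{m+1} if N ≤ p^{1/(m+1)} and A(N,p) = N²·p^{m(m+2)/(m+1)} if N > p^{1/(m+1)}. -/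
open MvPolynomial

namespace Stmt7Proof


noncomputable def zeta (p : ℕ) : ℂ := Complex.exp (2 * Real.pi * Complex.I / p)

lemma eP_eq_zeta_pow (p : ℕ) (x : ZMod p) : eP p x = zeta p ^ (x.val) := by
  rw [zeta, ← Complex.exp_nat_mul, eP]
  ring_nf

lemma zeta_pow_p (p : ℕ) (hp : p ≠ 0) : zeta p ^ p = 1 := by
  rw [zeta, ← Complex.exp_nat_mul]
  have hp0 : (p : ℂ) ≠ 0 := by exact_mod_cast hp
  have harg : (p : ℂ) * (2 * Real.pi * Complex.I / p) = 2 * Real.pi * Complex.I := by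
    field_simp
  rw [harg, Complex.exp_two_pi_mul_I]

lemma zeta_pow_mod (p : ℕ) (hp : p ≠ 0) (a : ℕ) : zeta p ^ (a % p) = zeta p ^ a := by
  conv_rhs => rw [← Nat.div_add_mod a p]
  rw [pow_add, pow_mul, zeta_pow_p p hp, one_pow, one_mul]

lemma eP_add (p : ℕ) [NeZero p] (x y : ZMod p) : eP p (x + y) = eP p x * eP p y := by
  rw [eP_eq_zeta_pow, eP_eq_zeta_pow, eP_eq_zeta_pow, ← pow_add, ZMod.val_add,
    zeta_pow_mod p (NeZero.ne p)]

lemma eP_zero (p : ℕ) [NeZero p] : eP p 0 = 1 := by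
  rw [eP_eq_zeta_pow, ZMod.val_zero, pow_zero]

lemma norm_eP (p : ℕ) (x : ZMod p) : ‖eP p x‖ = 1 := by
  have h : 2 * Real.pi * Complex.I * ((x.val : ℕ) : ℂ) / (p : ℂ)
      = ((2 * Real.pi * (x.val : ℝ) / p : ℝ) : ℂ) * Complex.I := by
    push_cast
    ring
  rw [eP, h, Complex.norm_exp_ofReal_mul_I]

lemma norm_eM (M z : ℕ) : ‖eM M z‖ = 1 := by
  have h : 2 * Real.pi * Complex.I * ((z : ℕ) : ℂ) / (M : ℂ)
      = ((2 * Real.pi * (z : ℝ) / M : ℝ) : ℂ) * Complex.I := by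
    push_cast
    ring
  rw [eM, h, Complex.norm_exp_ofReal_mul_I]

lemma eP_ne_zero (p : ℕ) (x : ZMod p) : eP p x ≠ 0 := by
  intro h
  have := norm_eP p x
  rw [h, norm_zero] at this
  norm_num at this

lemma conj_eP (p : ℕ) [NeZero p] (x : ZMod p) :
    (starRingEnd ℂ) (eP p x) = eP p (-x) := by
  have h1 : eP p x * eP p (-x) = 1 := by rw [← eP_add, add_neg_cancel, eP_zero]
  have h2 : eP p x * (starRingEnd ℂ) (eP p x) = 1 := by
    rw [Complex.mul_conj]
    have hx := norm_eP p x
    rw [Complex.normSq_eq_norm_sq, hx]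
    norm_num
  exact mul_left_cancel₀ (eP_ne_zero p x) (h2.trans h1.symm)

lemma eP_mul_conj (p : ℕ) [NeZero p] (x y : ZMod p) :
    eP p x * (starRingEnd ℂ) (eP p y) = eP p (x - y) := by
  rw [conj_eP, ← eP_add, sub_eq_add_neg]

lemma zeta_ne_one (p : ℕ) [hp : Fact p.Prime] : zeta p ≠ 1 := by
  have hp0 : (p : ℂ) ≠ 0 := by exact_mod_cast hp.out.ne_zero
  rw [zeta]
  intro h
  rcases Complex.exp_eq_one_iff.mp h with ⟨n, hn⟩
  rw [div_eq_iff hp0] at hn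
  have hπ : ((2 : ℂ) * Real.pi * Complex.I) ≠ 0 := by
    simp [Real.pi_ne_zero, Complex.I_ne_zero, Complex.ofReal_ne_zero]
  have h1 : ((2 : ℂ) * Real.pi * Complex.I) * 1 = ((2 : ℂ) * Real.pi * Complex.I) * (n * p) := by
    rw [mul_one]
    linear_combination hn
  have h2 : (1 : ℂ) = (n : ℂ) * p := mul_left_cancel₀ hπ h1
  have h3 : (1 : ℤ) = n * p := by exact_mod_cast h2
  have h4 : (p : ℤ) ∣ 1 := ⟨n, by linarith⟩
  have h5 : (p : ℤ) ≤ 1 := Int.le_of_dvd one_pos h4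
  have := hp.out.two_le
  omega

lemma sum_zeta (p : ℕ) [hp : Fact p.Prime] : ∑ i ∈ Finset.range p, zeta p ^ i = 0 := by
  rw [geom_sum_eq (zeta_ne_one p), zeta_pow_p p hp.out.ne_zero]
  simp

lemma sum_eP (p : ℕ) [hp : Fact p.Prime] : ∑ x : ZMod p, eP p x = 0 := by
  haveI : NeZero p := ⟨hp.out.ne_zero⟩
  have : ∑ x : ZMod p, eP p x = ∑ i ∈ Finset.range p, zeta p ^ i := by
    refine Finset.sum_nbij' (fun x => x.val) (fun i => (i : ZMod p)) ?_ ?_ ?_ ?_ ?_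
    · intro x _; exact Finset.mem_range.mpr (ZMod.val_lt x)
    · intro i _; exact Finset.mem_univ _
    · intro x _; exact ZMod.natCast_rightInverse x
    · intro i hi; exact ZMod.val_cast_of_lt (Finset.mem_range.mp hi)
    · intro x _; rw [eP_eq_zeta_pow]
  rw [this, sum_zeta]

lemma sum_eP_mul (p : ℕ) [hp : Fact p.Prime] (c : ZMod p) :
    ∑ x : ZMod p, eP p (c * x) = if c = 0 then (p : ℂ) else 0 := by
  haveI : NeZero p := ⟨hp.out.ne_zero⟩
  split_ifs with hc
  · subst hc
    simp only [zero_mul, eP_zero]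
    simp [ZMod.card]
  · have hbij : Function.Bijective (fun x : ZMod p => c * x) :=
      (Equiv.mulLeft₀ c hc).bijective
    rw [Fintype.sum_bijective _ hbij _ (fun x => eP p x) (fun x => rfl)]
    exact sum_eP p



lemma eq_C_of_fin_zero {F : Type*} [CommRing F] (P : MvPolynomial (Fin 0) F) :
    P = C (coeff 0 P) := by
  have : ∀ d : Fin 0 →₀ ℕ, d = 0 := fun d => Subsingleton.elim _ _
  ext d
  rw [this d, coeff_C]
  simp

theorem schwartz_zippel {F : Type*} [Field F] [Fintype F] [DecidableEq F] :
    ∀ (n : ℕ) (P : MvPolynomial (Fin n) F), P ≠ 0 →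
      (Finset.univ.filter fun v : Fin n → F => eval v P = 0).card * Fintype.card F
        ≤ P.totalDegree * Fintype.card F ^ n := by
  intro n
  induction n with
  | zero =>
    intro P hP
    have hempty : (Finset.univ.filter fun v : Fin 0 → F => eval v P = 0) = ∅ := by
      rw [Finset.filter_eq_empty_iff]
      intro v _
      rw [eq_C_of_fin_zero P, eval_C]
      intro h
      apply hP
      rw [eq_C_of_fin_zero P, h, map_zero]
    rw [hempty]
    simp
  | succ n ih =>
    intro P hP
    set q := Fintype.card F with hq
    have hq1 : 1 ≤ q := Fintype.card_pos
    set Q := finSuccEquiv F n P with hQdef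
    have hQ : Q ≠ 0 := by
      intro h
      apply hP
      apply (finSuccEquiv F n).injective
      rw [← hQdef, h, map_zero]
    set t := Q.natDegree with ht
    set c := Q.coeff t with hc
    have hcne : c ≠ 0 := by
      rw [hc, ht]
      exact Polynomial.leadingCoeff_ne_zero.mpr hQ
    -- counting function per tail
    have key : ∀ st : Fin n → F,
        (Finset.univ.filter fun y : F => eval (Fin.cons y st) P = 0).card
          ≤ if eval st c = 0 then q else t := by
      intro st
      split_ifs with hst
      · exact le_trans (Finset.card_filter_le _ _) (le_of_eq (Finset.card_univ))
      · -- univariate polynomial has at most t roots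
        set qp := Polynomial.map (eval st) Q with hqp
        have hqpne : qp ≠ 0 := by
          intro h
          apply hst
          rw [← Polynomial.coeff_map (eval st) t, ← hqp, h, Polynomial.coeff_zero]
        have hsub : (Finset.univ.filter fun y : F => eval (Fin.cons y st) P = 0)
            ⊆ qp.roots.toFinset := by
          intro y hy
          rw [Finset.mem_filter] at hy
          rw [Multiset.mem_toFinset, Polynomial.mem_roots hqpne]
          rw [Polynomial.IsRoot, hqp, ← eval_eq_eval_mv_eval' st y P]
          exact hy.2
        calc (Finset.univ.filter fun y : F => eval (Fin.cons y st) P = 0).card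
            ≤ qp.roots.toFinset.card := Finset.card_le_card hsub
          _ ≤ Multiset.card qp.roots := Multiset.toFinset_card_le _
          _ ≤ qp.natDegree := Polynomial.card_roots' qp
          _ ≤ t := Polynomial.natDegree_map_le
    -- main count
    have main : (Finset.univ.filter fun v : Fin (n+1) → F => eval v P = 0).card
        ≤ (Finset.univ.filter fun st : Fin n → F => eval st c = 0).card * q
          + q ^ n * t := by
      have hfib := Finset.card_eq_sum_card_fiberwise
        (f := fun v : Fin (n+1) → F => Fin.tail v)
        (s := Finset.univ.filter fun v : Fin (n+1) → F => eval v P = 0)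
        (t := (Finset.univ : Finset (Fin n → F))) (fun x _ => Finset.mem_univ _)
      rw [hfib]
      have hfibbd : ∀ st : Fin n → F,
          ((Finset.univ.filter fun v : Fin (n+1) → F => eval v P = 0).filter
              fun v => Fin.tail v = st).card
            ≤ if eval st c = 0 then q else t := by
        intro st
        refine le_trans ?_ (key st)
        apply Finset.card_le_card_of_injOn (fun v => v 0)
        · intro v hv
          simp only [Finset.mem_coe, Finset.mem_filter, Finset.mem_univ, true_and] at hv ⊢
          rcases hv with ⟨hv1, hv2⟩
          rw [← hv2]
          have : Fin.cons (v 0) (Fin.tail v) = v := Fin.cons_self_tail v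
          rw [this]
          exact hv1
        · intro v hv w hw hvw
          simp only [Finset.coe_filter, Set.mem_setOf_eq] at hv hw
          simp only at hvw
          have : Fin.cons (v 0) (Fin.tail v) = Fin.cons (w 0) (Fin.tail w) := by
            rw [hvw, hv.2, hw.2]
          rw [Fin.cons_self_tail, Fin.cons_self_tail] at this
          exact this
      calc ∑ st : Fin n → F, ((Finset.univ.filter
              fun v : Fin (n+1) → F => eval v P = 0).filter fun v => Fin.tail v = st).card
          ≤ ∑ st : Fin n → F, (if eval st c = 0 then q else t) := Finset.sum_le_sum
            (fun st _ => hfibbd st)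
        _ ≤ (Finset.univ.filter fun st : Fin n → F => eval st c = 0).card * q
            + q ^ n * t := by
          rw [Finset.sum_ite]
          gcongr
          · apply le_trans (Finset.sum_le_card_nsmul _ _ q (fun _ _ => le_refl q))
            simp [mul_comm]
          · apply le_trans (Finset.sum_le_card_nsmul _ _ t (fun _ _ => le_refl t))
            have : (Finset.univ.filter fun st : Fin n → F => ¬ eval st c = 0).card ≤ q ^ n := by
              apply le_trans (Finset.card_filter_le _ _)
              rw [Finset.card_univ, Fintype.card_fun]
              simp [hq]
            calc _ ≤ q ^ n * t := by
                  rw [smul_eq_mul]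
                  exact Nat.mul_le_mul_right t this
              _ = q ^ n * t := rfl
    -- combine with inductive hypothesis on c
    have hdegs : c.totalDegree + t ≤ P.totalDegree :=
      totalDegree_coeff_finSuccEquiv_add_le P t hcne
    have ihc := ih c hcne
    calc (Finset.univ.filter fun v : Fin (n+1) → F => eval v P = 0).card * q
        ≤ ((Finset.univ.filter fun st : Fin n → F => eval st c = 0).card * q
            + q ^ n * t) * q := Nat.mul_le_mul_right q main
      _ = ((Finset.univ.filter fun st : Fin n → F => eval st c = 0).card * q) * q
          + t * q ^ (n+1) := by ring
      _ ≤ (c.totalDegree * q ^ n) * q + t * q ^ (n+1) := by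
          gcongr
      _ = (c.totalDegree + t) * q ^ (n+1) := by ring
      _ ≤ P.totalDegree * q ^ (n+1) := Nat.mul_le_mul_right _ hdegs


section DomSec

variable {R : Type*} [CommRing R] {n : ℕ}

/-- All monomials of `P` are coordinatewise bounded by `Δ`. -/
def Dom (P : MvPolynomial (Fin n) R) (Δ : Fin n →₀ ℕ) : Prop :=
  ∀ d ∈ P.support, d ≤ Δ

lemma Dom.mono {P : MvPolynomial (Fin n) R} {Δ Δ' : Fin n →₀ ℕ}
    (h : Dom P Δ) (hle : Δ ≤ Δ') : Dom P Δ' :=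
  fun d hd => le_trans (h d hd) hle

lemma dom_add {P Q : MvPolynomial (Fin n) R} {Δ : Fin n →₀ ℕ}
    (hP : Dom P Δ) (hQ : Dom Q Δ) : Dom (P + Q) Δ := by
  intro d hd
  rcases Finset.mem_union.mp (MvPolynomial.support_add hd) with h | h
  · exact hP d h
  · exact hQ d h

lemma dom_monomial (d : Fin n →₀ ℕ) (c : R) : Dom (monomial d c) d := by
  intro e he
  rcases Finset.mem_singleton.mp (MvPolynomial.support_monomial_subset he)
  exact le_refl _

lemma dom_C (c : R) : Dom (C c : MvPolynomial (Fin n) R) 0 := dom_monomial 0 c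

lemma dom_mul {P Q : MvPolynomial (Fin n) R} {Δ Δ' : Fin n →₀ ℕ}
    (hP : Dom P Δ) (hQ : Dom Q Δ') : Dom (P * Q) (Δ + Δ') := by
  intro d hd
  rcases Finset.mem_add.mp (MvPolynomial.support_mul P Q hd) with ⟨a, ha, b, hb, rfl⟩
  exact add_le_add (hP a ha) (hQ b hb)

lemma finsupp_eq_of_le_add_eq {a b c e : Fin n →₀ ℕ} (ha : a ≤ c) (hb : b ≤ e)
    (hab : a + b = c + e) : a = c ∧ b = e := by
  rw [Finsupp.le_def] at ha hb
  constructor <;> ext l <;>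
  · have h1 := ha l
    have h2 := hb l
    have h3 : a l + b l = c l + e l := by
      rw [← Finsupp.add_apply, ← Finsupp.add_apply, hab]
    omega

lemma coeff_top_mul {P Q : MvPolynomial (Fin n) R} {Δ Δ' : Fin n →₀ ℕ}
    (hP : Dom P Δ) (hQ : Dom Q Δ') :
    coeff (Δ + Δ') (P * Q) = coeff Δ P * coeff Δ' Q := by
  rw [MvPolynomial.coeff_mul]
  rw [Finset.sum_eq_single (Δ, Δ')]
  · intro b hb hbne
    rcases eq_or_ne (coeff b.1 P) 0 with h | h
    · rw [h, zero_mul]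
    rcases eq_or_ne (coeff b.2 Q) 0 with h' | h'
    · rw [h', mul_zero]
    exfalso
    apply hbne
    have hb1 := hP b.1 (MvPolynomial.mem_support_iff.mpr h)
    have hb2 := hQ b.2 (MvPolynomial.mem_support_iff.mpr h')
    have := finsupp_eq_of_le_add_eq hb1 hb2 (Finset.HasAntidiagonal.mem_antidiagonal.mp hb)
    exact Prod.ext this.1 this.2
  · intro h
    exfalso
    exact h (Finset.HasAntidiagonal.mem_antidiagonal.mpr rfl)

lemma dom_prod {ι : Type*} (t : Finset ι) (g : ι → MvPolynomial (Fin n) R)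
    (Δ : ι → (Fin n →₀ ℕ)) (h : ∀ j ∈ t, Dom (g j) (Δ j)) :
    Dom (∏ j ∈ t, g j) (∑ j ∈ t, Δ j) := by
  induction t using Finset.cons_induction with
  | empty =>
    simp only [Finset.prod_empty, Finset.sum_empty]
    exact dom_C 1
  | cons a t hat ih =>
    rw [Finset.prod_cons, Finset.sum_cons]
    exact dom_mul (h a (Finset.mem_cons_self a t))
      (ih fun j hj => h j (Finset.mem_cons_of_mem hj))

lemma coeff_top_prod {ι : Type*} (t : Finset ι) (g : ι → MvPolynomial (Fin n) R)
    (Δ : ι → (Fin n →₀ ℕ)) (h : ∀ j ∈ t, Dom (g j) (Δ j)) :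
    coeff (∑ j ∈ t, Δ j) (∏ j ∈ t, g j) = ∏ j ∈ t, coeff (Δ j) (g j) := by
  induction t using Finset.cons_induction with
  | empty =>
    simp only [Finset.prod_empty, Finset.sum_empty]
    rw [show ((0 : Fin n →₀ ℕ)) = (0 : Fin n →₀ ℕ) from rfl]
    simp [MvPolynomial.coeff_one]
  | cons a t hat ih =>
    rw [Finset.prod_cons, Finset.sum_cons,
      coeff_top_mul (h a (Finset.mem_cons_self a t))
        (dom_prod t g Δ fun j hj => h j (Finset.mem_cons_of_mem hj)),
      ih fun j hj => h j (Finset.mem_cons_of_mem hj), Finset.prod_cons]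

lemma dom_pow {P : MvPolynomial (Fin n) R} {Δ : Fin n →₀ ℕ} (h : Dom P Δ) (k : ℕ) :
    Dom (P ^ k) (k • Δ) := by
  have := dom_prod (Finset.range k) (fun _ => P) (fun _ => Δ) (fun _ _ => h)
  simpa using this

lemma coeff_top_pow {P : MvPolynomial (Fin n) R} {Δ : Fin n →₀ ℕ} (h : Dom P Δ) (k : ℕ) :
    coeff (k • Δ) (P ^ k) = (coeff Δ P) ^ k := by
  have := coeff_top_prod (Finset.range k) (fun _ => P) (fun _ => Δ) (fun _ _ => h)
  simpa using this

/-- Total size of a monomial exponent vector. -/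
def fsize (Δ : Fin n →₀ ℕ) : ℕ := ∑ j, Δ j

lemma fsize_mono {Δ Δ' : Fin n →₀ ℕ} (h : Δ ≤ Δ') : fsize Δ ≤ fsize Δ' :=
  Finset.sum_le_sum fun j _ => Finsupp.le_def.mp h j

lemma totalDegree_le_of_dom {P : MvPolynomial (Fin n) R} {Δ : Fin n →₀ ℕ}
    (h : Dom P Δ) : P.totalDegree ≤ fsize Δ := by
  apply Finset.sup_le
  intro d hd
  calc d.sum (fun _ e => e) = ∑ j, d j := Finsupp.sum_fintype _ _ (fun _ => rfl)
    _ ≤ ∑ j, Δ j := Finset.sum_le_sum fun j _ => Finsupp.le_def.mp (h d hd) j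
    _ = fsize Δ := rfl

lemma bind₁_eq_sum (f : Fin n → MvPolynomial (Fin n) R) (P : MvPolynomial (Fin n) R) :
    bind₁ f P = ∑ d ∈ P.support, C (coeff d P) * ∏ j, f j ^ d j := by
  conv_lhs => rw [P.as_sum, map_sum]
  refine Finset.sum_congr rfl fun d _ => ?_
  rw [MvPolynomial.bind₁_monomial]
  congr 1
  apply Finset.prod_subset (Finset.subset_univ _)
  intro j _ hj
  rw [Finsupp.notMem_support_iff.mp hj, pow_zero]

lemma smul_le_smul_finsupp {a b : ℕ} {Δ : Fin n →₀ ℕ} (h : a ≤ b) : a • Δ ≤ b • Δ := by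
  rw [Finsupp.le_def]
  intro l
  rw [Finsupp.smul_apply, Finsupp.smul_apply, smul_eq_mul, smul_eq_mul]
  exact Nat.mul_le_mul_right _ h

lemma dom_bind₁ (f : Fin n → MvPolynomial (Fin n) R) (Δf : Fin n → (Fin n →₀ ℕ))
    (hf : ∀ j, Dom (f j) (Δf j)) (P : MvPolynomial (Fin n) R) (D : Fin n →₀ ℕ)
    (hP : Dom P D) : Dom (bind₁ f P) (∑ j, D j • Δf j) := by
  rw [bind₁_eq_sum]
  intro d hd
  rcases Finset.mem_biUnion.mp (MvPolynomial.support_sum hd) with ⟨e, he, hde⟩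
  have hterm : Dom (C (coeff e P) * ∏ j, f j ^ e j) (0 + ∑ j, e j • Δf j) :=
    dom_mul (dom_C _) (dom_prod _ _ _ fun j _ => dom_pow (hf j) (e j))
  rw [zero_add] at hterm
  refine le_trans (hterm d hde) (Finset.sum_le_sum fun j _ => ?_)
  exact smul_le_smul_finsupp (Finsupp.le_def.mp (hP e he) j)

lemma coeff_top_bind₁ {F : Type*} [Field F] (f : Fin n → MvPolynomial (Fin n) F)
    (Δf : Fin n → (Fin n →₀ ℕ)) (hf : ∀ j, Dom (f j) (Δf j))
    (htop : ∀ j, coeff (Δf j) (f j) ≠ 0)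
    (hinj : ∀ d d' : Fin n →₀ ℕ, ∑ j, d j • Δf j = ∑ j, d' j • Δf j → d = d')
    (P : MvPolynomial (Fin n) F) (D : Fin n →₀ ℕ) (hP : Dom P D)
    (hPD : coeff D P ≠ 0) :
    coeff (∑ j, D j • Δf j) (bind₁ f P) ≠ 0 := by
  rw [bind₁_eq_sum, MvPolynomial.coeff_sum]
  rw [Finset.sum_eq_single D]
  · rw [MvPolynomial.coeff_C_mul]
    have hD : coeff (∑ j, D j • Δf j) (∏ j, f j ^ D j)
        = ∏ j, (coeff (Δf j) (f j)) ^ D j := by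
      rw [coeff_top_prod Finset.univ (fun j => f j ^ D j) (fun j => D j • Δf j)
        (fun j _ => dom_pow (hf j) (D j))]
      exact Finset.prod_congr rfl fun j _ => coeff_top_pow (hf j) (D j)
    rw [hD]
    exact mul_ne_zero hPD (Finset.prod_ne_zero_iff.mpr fun j _ => pow_ne_zero _ (htop j))
  · intro d hd hdne
    by_contra hne0
    have hterm : Dom (C (coeff d P) * ∏ j, f j ^ d j) (0 + ∑ j, d j • Δf j) :=
      dom_mul (dom_C _) (dom_prod _ _ _ fun j _ => dom_pow (hf j) (d j))
    rw [zero_add] at hterm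
    have hmem : (∑ j, D j • Δf j) ∈ (C (coeff d P) * ∏ j, f j ^ d j).support :=
      MvPolynomial.mem_support_iff.mpr hne0
    have hle : (∑ j, D j • Δf j) ≤ ∑ j, d j • Δf j := hterm _ hmem
    have hge : (∑ j : Fin n, d j • Δf j) ≤ ∑ j : Fin n, D j • Δf j :=
      Finset.sum_le_sum fun j _ => smul_le_smul_finsupp (Finsupp.le_def.mp (hP d hd) j)
    exact hdne (hinj d D (congrArg id (le_antisymm hge hle)))
  · intro h
    exact absurd (MvPolynomial.mem_support_iff.mpr hPD) h

end DomSec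

section Delta

variable (m : ℕ) (s : ℕ → ℕ → ℕ)

/-- An upper bound for the relevant entries of `s`. -/
def sbar : ℕ := Finset.sup (Finset.range (m+1) ×ˢ Finset.range (m+1)) (fun q => s q.1 q.2)

lemma s_le_sbar {i j : ℕ} (hi : i ≤ m) (hj : j ≤ m) : s i j ≤ sbar m s := by
  have hmem : ((i, j) : ℕ × ℕ) ∈ Finset.range (m+1) ×ˢ Finset.range (m+1) := by
    rw [Finset.mem_product, Finset.mem_range, Finset.mem_range]
    omega
  exact Finset.le_sup (f := fun q : ℕ × ℕ => s q.1 q.2) hmem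

/-- The base constant for degree bounds. -/
def Bc : ℕ := (m + 1) * (sbar m s + 1)

lemma one_le_Bc : 1 ≤ Bc m s := by
  have : 1 ≤ (m+1) := by omega
  have : 1 ≤ sbar m s + 1 := by omega
  calc 1 = 1 * 1 := by omega
    _ ≤ (m+1) * (sbar m s + 1) := by
        apply Nat.mul_le_mul <;> omega

/-- The vector of partial-degree bounds of the `i`-th polynomial of a system. -/
noncomputable def svec (i : Fin (m+1)) : Fin (m+1) →₀ ℕ :=
  ∑ j ∈ Finset.univ.filter (fun j : Fin (m+1) => i < j), Finsupp.single j (s i.val j.val)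

noncomputable def Dvec (i : Fin (m+1)) : Fin (m+1) →₀ ℕ :=
  Finsupp.single i 1 + svec m s i

lemma svec_apply (i l : Fin (m+1)) :
    svec m s i l = if i < l then s i.val l.val else 0 := by
  rw [svec, Finset.sum_apply']
  have : ∀ j ∈ Finset.univ.filter (fun j : Fin (m+1) => i < j),
      (Finsupp.single j (s i.val j.val)) l = if j = l then s i.val j.val else 0 := by
    intro j _
    rw [Finsupp.single_apply]
  rw [Finset.sum_congr rfl this, Finset.sum_ite_eq' (Finset.univ.filter
    (fun j : Fin (m+1) => i < j)) l (fun j => s i.val j.val)]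
  simp only [Finset.mem_filter, Finset.mem_univ, true_and]

lemma Dvec_apply (i l : Fin (m+1)) :
    Dvec m s i l = (if l = i then 1 else 0) + (if i < l then s i.val l.val else 0) := by
  rw [Dvec, Finsupp.add_apply, svec_apply, Finsupp.single_apply]
  congr 1
  by_cases h : l = i
  · rw [if_pos h, if_pos h.symm]
  · rw [if_neg h, if_neg (fun hh => h hh.symm)]

lemma Dvec_self (i : Fin (m+1)) : Dvec m s i i = 1 := by
  rw [Dvec_apply, if_pos rfl, if_neg (lt_irrefl i), add_zero]

lemma Dvec_eq_zero_of_lt {i l : Fin (m+1)} (h : l < i) : Dvec m s i l = 0 := by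
  rw [Dvec_apply, if_neg (ne_of_lt h), if_neg (not_lt_of_gt h), add_zero]

lemma Dvec_of_lt {i l : Fin (m+1)} (h : i < l) : Dvec m s i l = s i.val l.val := by
  rw [Dvec_apply, if_neg (ne_of_gt h), if_pos h, zero_add]

/-- The dominant monomial of the `k`-th iterate of the `i`-th coordinate. -/
noncomputable def DeltaF : ℕ → Fin (m+1) → (Fin (m+1) →₀ ℕ)
  | 0 => fun i => Finsupp.single i 1
  | (k+1) => fun i => ∑ j : Fin (m+1), (Dvec m s i) j • DeltaF k j

lemma DeltaF_succ_apply (k : ℕ) (i l : Fin (m+1)) :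
    DeltaF m s (k+1) i l = ∑ j : Fin (m+1), (Dvec m s i) j * DeltaF m s k j l := by
  show (∑ j : Fin (m+1), (Dvec m s i) j • DeltaF m s k j) l = _
  rw [Finset.sum_apply']
  refine Finset.sum_congr rfl fun j _ => ?_
  rw [Finsupp.smul_apply, smul_eq_mul]

lemma DeltaF_lt_eq_zero : ∀ (k : ℕ) (j l : Fin (m+1)), l < j → DeltaF m s k j l = 0 := by
  intro k
  induction k with
  | zero =>
    intro j l h
    show (Finsupp.single j 1) l = 0
    rw [Finsupp.single_apply, if_neg (ne_of_gt h)]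
  | succ k ih =>
    intro j l h
    rw [DeltaF_succ_apply]
    apply Finset.sum_eq_zero
    intro jj _
    by_cases hjj : jj < j
    · rw [Dvec_eq_zero_of_lt m s hjj, zero_mul]
    · have : l < jj := lt_of_lt_of_le h (not_lt.mp hjj)
      rw [ih jj l this, mul_zero]

lemma DeltaF_diag : ∀ (k : ℕ) (j : Fin (m+1)), DeltaF m s k j j = 1 := by
  intro k
  induction k with
  | zero =>
    intro j
    exact Finsupp.single_eq_same
  | succ k ih =>
    intro j
    rw [DeltaF_succ_apply]
    rw [Finset.sum_eq_single j]
    · rw [Dvec_self, ih, one_mul]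
    · intro jj _ hne
      rcases lt_or_gt_of_ne hne with hlt | hgt
      · rw [Dvec_eq_zero_of_lt m s hlt, zero_mul]
      · rw [DeltaF_lt_eq_zero m s k jj j hgt, mul_zero]
    · intro h
      exact absurd (Finset.mem_univ j) h

lemma DeltaF_growth (hs1 : ∀ i, i < m → 1 ≤ s i (i+1)) (i : Fin (m+1)) (hi : i.val < m) :
    ∀ k : ℕ, k ≤ DeltaF m s k i ⟨i.val + 1, by omega⟩ := by
  set l : Fin (m+1) := ⟨i.val + 1, by omega⟩ with hl
  have hil : i < l := by
    rw [Fin.lt_def]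
    simp [hl]
  have hine : i ≠ l := ne_of_lt hil
  intro k
  induction k with
  | zero => exact Nat.zero_le _
  | succ k ih =>
    rw [DeltaF_succ_apply]
    have hsub : {i, l} ⊆ (Finset.univ : Finset (Fin (m+1))) := Finset.subset_univ _
    have hpair : ∑ j ∈ ({i, l} : Finset (Fin (m+1))),
        (Dvec m s i) j * DeltaF m s k j l
        = Dvec m s i i * DeltaF m s k i l + Dvec m s i l * DeltaF m s k l l := by
      rw [Finset.sum_pair hine]
    have hle : ∑ j ∈ ({i, l} : Finset (Fin (m+1))), (Dvec m s i) j * DeltaF m s k j l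
        ≤ ∑ j : Fin (m+1), (Dvec m s i) j * DeltaF m s k j l :=
      Finset.sum_le_sum_of_subset hsub
    refine le_trans ?_ hle
    rw [hpair, Dvec_self, one_mul, DeltaF_diag, Dvec_of_lt m s hil, mul_one]
    have hs : 1 ≤ s i.val l.val := by
      have := hs1 i.val hi
      simpa [hl] using this
    omega

lemma DeltaF_last (k : ℕ) : DeltaF m s k (Fin.last m) = Finsupp.single (Fin.last m) 1 := by
  induction k with
  | zero => rfl
  | succ k ih =>
    show (∑ j : Fin (m+1), (Dvec m s (Fin.last m)) j • DeltaF m s k j) = _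
    rw [Finset.sum_eq_single (Fin.last m)]
    · rw [Dvec_self, one_smul, ih]
    · intro jj _ hne
      have hlt : jj < Fin.last m := lt_of_le_of_ne (Fin.le_last jj) hne
      rw [Dvec_eq_zero_of_lt m s hlt, zero_smul]
    · intro h
      exact absurd (Finset.mem_univ _) h

lemma fsize_single (j : Fin (m+1)) (c : ℕ) : fsize (Finsupp.single j c) = c := by
  rw [fsize]
  rw [Finset.sum_eq_single j]
  · exact Finsupp.single_eq_same
  · intro jj _ hne
    rw [Finsupp.single_apply, if_neg (fun h => hne h.symm)]
  · intro h
    exact absurd (Finset.mem_univ _) h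

lemma fsize_DeltaF_succ (k : ℕ) (i : Fin (m+1)) :
    fsize (DeltaF m s (k+1) i) = ∑ j : Fin (m+1), (Dvec m s i) j * fsize (DeltaF m s k j) := by
  rw [fsize]
  have hh : ∀ l : Fin (m+1), DeltaF m s (k+1) i l
      = ∑ j : Fin (m+1), (Dvec m s i) j * DeltaF m s k j l :=
    fun l => DeltaF_succ_apply m s k i l
  rw [Finset.sum_congr rfl (fun l _ => hh l), Finset.sum_comm]
  refine Finset.sum_congr rfl fun j _ => ?_
  rw [← Finset.mul_sum]
  rfl

lemma DeltaF_size (k : ℕ) (i : Fin (m+1)) :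
    fsize (DeltaF m s k i) ≤ (Bc m s * (k+1)) ^ (m - i.val) := by
  induction k generalizing i with
  | zero =>
    show fsize (Finsupp.single i 1) ≤ _
    rw [fsize_single]
    exact Nat.one_le_pow _ _ (by
      have := one_le_Bc m s
      omega)
  | succ k ih =>
    by_cases hi : i.val = m
    · have hieq : i = Fin.last m := Fin.ext hi
      rw [hieq, DeltaF_last, fsize_single]
      have hexp0 : m - (Fin.last m).val = 0 := by simp
      rw [hexp0, pow_zero]
    · have him : i.val < m := lt_of_le_of_ne (Nat.lt_succ_iff.mp i.isLt) hi
      set A := Bc m s * (k+1) with hA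
      have hA1 : 1 ≤ A := by
        have := one_le_Bc m s
        calc 1 = 1 * 1 := rfl
          _ ≤ Bc m s * (k+1) := Nat.mul_le_mul this (by omega)
      set e := m - i.val - 1 with he
      have hexp : m - i.val = e + 1 := by omega
      rw [fsize_DeltaF_succ]
      have hsplit : ∑ j : Fin (m+1), (Dvec m s i) j * fsize (DeltaF m s k j)
          = (Dvec m s i) i * fsize (DeltaF m s k i)
            + ∑ j ∈ Finset.univ.erase i, (Dvec m s i) j * fsize (DeltaF m s k j) := by
        rw [← Finset.add_sum_erase _ _ (Finset.mem_univ i)]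
      rw [hsplit, Dvec_self, one_mul]
      have hbound : ∀ j ∈ Finset.univ.erase i,
          (Dvec m s i) j * fsize (DeltaF m s k j) ≤ sbar m s * A ^ e := by
        intro j hj
        have hne : j ≠ i := (Finset.mem_erase.mp hj).1
        rcases lt_or_gt_of_ne hne with hlt | hgt
        · rw [Dvec_eq_zero_of_lt m s hlt, zero_mul]
          exact Nat.zero_le _
        · rw [Dvec_of_lt m s hgt]
          have h1 : s i.val j.val ≤ sbar m s :=
            s_le_sbar m s (by omega) (by omega)
          have h2 : fsize (DeltaF m s k j) ≤ A ^ (m - j.val) := ih j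
          have h3 : A ^ (m - j.val) ≤ A ^ e := by
            apply Nat.pow_le_pow_right hA1
            have : i.val < j.val := hgt
            omega
          exact Nat.mul_le_mul h1 (le_trans h2 h3)
      have hsum2 : ∑ j ∈ Finset.univ.erase i, (Dvec m s i) j * fsize (DeltaF m s k j)
          ≤ m * (sbar m s * A ^ e) := by
        have hcard : (Finset.univ.erase i).card = m := by
          rw [Finset.card_erase_of_mem (Finset.mem_univ i), Finset.card_univ,
            Fintype.card_fin]
          omega
        calc ∑ j ∈ Finset.univ.erase i, (Dvec m s i) j * fsize (DeltaF m s k j)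
            ≤ (Finset.univ.erase i).card • (sbar m s * A ^ e) :=
              Finset.sum_le_card_nsmul _ _ _ hbound
          _ = m * (sbar m s * A ^ e) := by rw [smul_eq_mul, hcard]
      have hfirst : fsize (DeltaF m s k i) ≤ A ^ (e+1) := by
        rw [← hexp]
        exact ih i
      calc fsize (DeltaF m s k i)
            + ∑ j ∈ Finset.univ.erase i, (Dvec m s i) j * fsize (DeltaF m s k j)
          ≤ A ^ (e+1) + m * (sbar m s * A ^ e) := Nat.add_le_add hfirst hsum2
        _ = A ^ e * (A + m * sbar m s) := by ring
        _ ≤ A ^ e * (Bc m s * (k+2)) := by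
            apply Nat.mul_le_mul (le_refl (A ^ e))
            have hmors : m * sbar m s ≤ Bc m s := by
              rw [Bc]
              exact Nat.mul_le_mul (by omega) (by omega)
            have hstep : Bc m s * (k+2) = A + Bc m s := by
              rw [hA]
              ring
            omega
        _ ≤ (Bc m s * (k+2)) ^ e * (Bc m s * (k+2)) := by
            apply Nat.mul_le_mul _ (le_refl _)
            apply Nat.pow_le_pow_left
            rw [hA]
            exact Nat.mul_le_mul (le_refl _) (by omega)
        _ = (Bc m s * (k+2)) ^ (e+1) := by ring
        _ = (Bc m s * (k+1+1)) ^ (m - i.val) := by rw [hexp]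

lemma DeltaF_size' (k : ℕ) (i : Fin (m+1)) :
    fsize (DeltaF m s k i) ≤ (Bc m s * (k+1)) ^ m := by
  refine le_trans (DeltaF_size m s k i) (Nat.pow_le_pow_right ?_ (by omega))
  have := one_le_Bc m s
  calc 1 = 1 * 1 := rfl
    _ ≤ Bc m s * (k+1) := Nat.mul_le_mul this (by omega)

/-- Injectivity of nonnegative combinations of a triangular family. -/
lemma tri_inj (Δf : Fin (m+1) → (Fin (m+1) →₀ ℕ))
    (h1 : ∀ j l, l < j → Δf j l = 0) (h2 : ∀ j, Δf j j = 1)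
    (d d' : Fin (m+1) →₀ ℕ)
    (h : ∑ j, d j • Δf j = ∑ j, d' j • Δf j) : d = d' := by
  have happ : ∀ l : Fin (m+1), ∑ j, d j * Δf j l = ∑ j, d' j * Δf j l := by
    intro l
    have := congrArg (fun v : Fin (m+1) →₀ ℕ => v l) h
    simpa [Finset.sum_apply', Finsupp.smul_apply] using this
  have split : ∀ (e : Fin (m+1) →₀ ℕ) (l : Fin (m+1)),
      ∑ j, e j * Δf j l = (∑ j ∈ Finset.univ.filter (fun j => j < l), e j * Δf j l) + e l := by
    intro e l
    rw [← Finset.sum_filter_add_sum_filter_not Finset.univ (fun j => j < l)]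
    congr 1
    rw [Finset.sum_eq_single l]
    · rw [h2, mul_one]
    · intro j hj hne
      have hlt : l < j := by
        rcases Finset.mem_filter.mp hj with ⟨_, hnlt⟩
        rcases lt_trichotomy j l with h' | h' | h'
        · exact absurd h' hnlt
        · exact absurd h' hne
        · exact h'
      rw [h1 j l hlt, mul_zero]
    · intro hnotmem
      exfalso
      apply hnotmem
      rw [Finset.mem_filter]
      exact ⟨Finset.mem_univ l, lt_irrefl l⟩
  suffices H : ∀ lv : ℕ, ∀ l : Fin (m+1), l.val = lv → d l = d' l by
    ext l
    exact H l.val l rfl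
  intro lv
  induction lv using Nat.strong_induction_on with
  | _ lv IH =>
    intro l hlval
    have h3 := happ l
    rw [split d l, split d' l] at h3
    have h4 : ∑ j ∈ Finset.univ.filter (fun j => j < l), d j * Δf j l
        = ∑ j ∈ Finset.univ.filter (fun j => j < l), d' j * Δf j l := by
      refine Finset.sum_congr rfl fun j hj => ?_
      have hjl : j < l := (Finset.mem_filter.mp hj).2
      have hjv : j.val < lv := by
        have : j.val < l.val := hjl
        omega
      rw [IH j.val hjv j rfl]
    omega

end Delta

section Sys

variable {R : Type*} [CommRing R] {m : ℕ} {s : ℕ → ℕ → ℕ}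

lemma prod_X_pow_monomial (t : Finset (Fin (m+1))) (e : Fin (m+1) → ℕ) :
    (∏ j ∈ t, (X j : MvPolynomial (Fin (m+1)) R) ^ e j)
      = monomial (∑ j ∈ t, Finsupp.single j (e j)) 1 := by
  induction t using Finset.cons_induction with
  | empty =>
    simp only [Finset.prod_empty, Finset.sum_empty]
    rfl
  | cons a t hat ih =>
    rw [Finset.prod_cons, Finset.sum_cons, ih, X_pow_eq_monomial, monomial_mul, one_mul]

lemma dom_X (i : Fin (m+1)) : Dom (X i : MvPolynomial (Fin (m+1)) R) (Finsupp.single i 1) := by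
  rw [← pow_one (X i : MvPolynomial (Fin (m+1)) R), X_pow_eq_monomial]
  exact dom_monomial _ _

lemma sys_dom (F : Fin (m+1) → MvPolynomial (Fin (m+1)) R) (hF : IsFSystem m s F)
    (i : Fin (m+1)) :
    Dom (F i) (Dvec m s i) ∧ coeff (Dvec m s i) (F i) ≠ 0 := by
  by_cases him : i.val < m
  · obtain ⟨G, H, Gt, g, hg, hFi, hGsup, hHsup, hGeq, hGt, hHle⟩ := hF.2 i him
    have hCX : C g * (∏ j ∈ Finset.univ.filter (fun j : Fin (m+1) => i < j),
        (X j : MvPolynomial (Fin (m+1)) R) ^ s i.val j.val) = monomial (svec m s i) g := by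
      rw [prod_X_pow_monomial, C_mul_monomial, mul_one]
      rfl
    have hGeq' : G = monomial (svec m s i) g + Gt := by rw [hGeq, hCX]
    have hGt_sub : Gt.support ⊆ G.support ∪ (monomial (svec m s i) g).support := by
      have hh : Gt = G - monomial (svec m s i) g := by
        rw [hGeq']
        ring
      rw [hh]
      exact MvPolynomial.support_sub _ _ _
    have domGt : Dom Gt (svec m s i) := by
      intro d hd
      rw [Finsupp.le_def]
      intro l
      rw [svec_apply]
      by_cases hil : i < l
      · rw [if_pos hil]
        exact le_of_lt (hGt d hd l hil)
      · rw [if_neg hil]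
        have hd0 : d l = 0 := by
          rcases Finset.mem_union.mp (hGt_sub hd) with h | h
          · exact hGsup d h l (not_lt.mp hil)
          · rcases Finset.mem_singleton.mp (MvPolynomial.support_monomial_subset h)
            rw [svec_apply, if_neg hil]
        omega
    have domG : Dom G (svec m s i) := by
      rw [hGeq']
      exact dom_add (fun d hd => by
        rcases Finset.mem_singleton.mp (MvPolynomial.support_monomial_subset hd)
        exact le_refl _) domGt
    have l1 : Fin (m+1) := ⟨i.val + 1, by omega⟩
    have topG : coeff (svec m s i) G = g := by
      rw [hGeq', MvPolynomial.coeff_add, MvPolynomial.coeff_monomial, if_pos rfl]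
      have hGt0 : coeff (svec m s i) Gt = 0 := by
        by_contra hne
        have hmem := MvPolynomial.mem_support_iff.mpr hne
        set l1 : Fin (m+1) := ⟨i.val + 1, by omega⟩ with hl1
        have hil1 : i < l1 := by
          rw [Fin.lt_def]
          simp [hl1]
        have := hGt _ hmem l1 hil1
        rw [svec_apply, if_pos hil1] at this
        exact lt_irrefl _ this
      rw [hGt0, add_zero]
    have domH : Dom H (Dvec m s i) := by
      intro d hd
      rw [Finsupp.le_def]
      intro l
      rw [Dvec_apply]
      by_cases hil : i < l
      · rw [if_pos hil]
        have := hHle d hd l hil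
        omega
      · have hd0 : d l = 0 := hHsup d hd l (not_lt.mp hil)
        omega
    constructor
    · rw [hFi]
      exact dom_add (dom_mul (dom_X i) domG) domH
    · rw [hFi, MvPolynomial.coeff_add]
      have h1 : coeff (Dvec m s i) (X i * G) = g := by
        rw [Dvec, MvPolynomial.coeff_X_mul, topG]
      have h2 : coeff (Dvec m s i) H = 0 := by
        by_contra hne
        have hmem := MvPolynomial.mem_support_iff.mpr hne
        have := hHsup _ hmem i (le_refl i)
        rw [Dvec_self] at this
        omega
      rw [h1, h2, add_zero]
      exact hg
  · have hieq : i = Fin.last m := by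
      have hval : i.val = m := by omega
      exact Fin.ext (by rw [hval, Fin.val_last])
    obtain ⟨g, h, hg, hlast⟩ := hF.1
    have hsvec0 : svec m s (Fin.last m) = 0 := by
      rw [svec]
      have : Finset.univ.filter (fun j : Fin (m+1) => Fin.last m < j) = ∅ := by
        rw [Finset.filter_eq_empty_iff]
        intro j _
        exact not_lt.mpr (Fin.le_last j)
      rw [this, Finset.sum_empty]
    have hDlast : Dvec m s (Fin.last m) = Finsupp.single (Fin.last m) 1 := by
      rw [Dvec, hsvec0, add_zero]
    have hCXl : C g * (X (Fin.last m) : MvPolynomial (Fin (m+1)) R)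
        = monomial (Finsupp.single (Fin.last m) 1) g := by
      rw [← pow_one (X (Fin.last m) : MvPolynomial (Fin (m+1)) R), X_pow_eq_monomial,
        C_mul_monomial, mul_one]
    rw [hieq, hlast, hCXl, hDlast]
    constructor
    · apply dom_add
      · exact dom_monomial _ _
      · intro d hd
        have hd0 : d = 0 := Finset.mem_singleton.mp
          (MvPolynomial.support_monomial_subset (by rwa [MvPolynomial.C_apply] at hd))
        rw [hd0]
        exact zero_le
    · rw [MvPolynomial.coeff_add, MvPolynomial.coeff_monomial, if_pos rfl,
        MvPolynomial.coeff_C, if_neg, add_zero]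
      · exact hg
      · intro hh
        exact one_ne_zero (Finsupp.single_eq_zero.mp hh.symm)

end Sys

section Iter

variable {F : Type*} [Field F] {m : ℕ} {s : ℕ → ℕ → ℕ}

lemma iter_dom_top (Fs : ℕ → Fin (m + 1) → MvPolynomial (Fin (m + 1)) F)
    (hsys : ∀ k, 1 ≤ k → IsFSystem m s (Fs k)) :
    ∀ (k : ℕ) (i : Fin (m+1)),
      Dom (iterSys m Fs k i) (DeltaF m s k i)
        ∧ coeff (DeltaF m s k i) (iterSys m Fs k i) ≠ 0 := by
  intro k
  induction k with
  | zero =>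
    intro i
    constructor
    · exact dom_X i
    · show coeff (Finsupp.single i 1) (X i : MvPolynomial (Fin (m+1)) F) ≠ 0
      rw [← pow_one (X i : MvPolynomial (Fin (m+1)) F), X_pow_eq_monomial,
        MvPolynomial.coeff_monomial, if_pos rfl]
      exact one_ne_zero
  | succ k ih =>
    intro i
    have hsd := sys_dom (Fs (k+1)) (hsys (k+1) (by omega)) i
    constructor
    · show Dom (bind₁ (iterSys m Fs k) (Fs (k+1) i)) (∑ j, (Dvec m s i) j • DeltaF m s k j)
      exact dom_bind₁ _ _ (fun j => (ih j).1) _ _ hsd.1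
    · show coeff (∑ j, (Dvec m s i) j • DeltaF m s k j)
        (bind₁ (iterSys m Fs k) (Fs (k+1) i)) ≠ 0
      exact coeff_top_bind₁ _ _ (fun j => (ih j).1) (fun j => (ih j).2)
        (tri_inj m (DeltaF m s k) (fun j l => DeltaF_lt_eq_zero m s k j l) (DeltaF_diag m s k))
        _ _ hsd.1 hsd.2

end Iter


section DecompSec

variable {K : Type*} [Field K] {n : ℕ}


/-- Decomposition of a polynomial that is linear in the variable `i`. -/
lemma linear_decomp (P : MvPolynomial (Fin n) K) (Δ : Fin n →₀ ℕ) (i : Fin n)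
    (hdom : Dom P Δ) (hΔi : Δ i = 1) (htop : coeff Δ P ≠ 0) :
    ∃ Lam M : MvPolynomial (Fin n) K,
      P = X i * Lam + M ∧
      (∀ d ∈ Lam.support, d i = 0) ∧
      (∀ d ∈ M.support, d i = 0) ∧
      coeff (Finsupp.erase i Δ) Lam = coeff Δ P ∧
      (∀ d ∈ Lam.support, d ≤ Finsupp.erase i Δ) := by
  classical
  set f1 := P.support.filter (fun d => d i = 1) with hf1
  set f0 := P.support.filter (fun d => ¬ d i = 1) with hf0
  set Lam := ∑ d ∈ f1, monomial (Finsupp.erase i d) (coeff d P) with hLam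
  set M := ∑ d ∈ f0, monomial d (coeff d P) with hM
  have hsplit : ∀ d ∈ P.support, d i ≤ 1 := by
    intro d hd
    have := Finsupp.le_def.mp (hdom d hd) i
    omega
  have herase : ∀ d : Fin n →₀ ℕ, d i = 1 →
      Finsupp.single i 1 + Finsupp.erase i d = d := by
    intro d hdi
    conv_rhs => rw [← Finsupp.single_add_erase i d]
    rw [hdi]
  refine ⟨Lam, M, ?_, ?_, ?_, ?_, ?_⟩
  · -- P = X i * Lam + M
    rw [hLam, hM, Finset.mul_sum]
    have hXmon : ∀ d ∈ f1, X i * monomial (Finsupp.erase i d) (coeff d P)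
        = monomial d (coeff d P) := by
      intro d hd
      have hdi : d i = 1 := (Finset.mem_filter.mp hd).2
      rw [← pow_one (X i : MvPolynomial (Fin n) K), X_pow_eq_monomial, monomial_mul,
        one_mul, herase d hdi]
    rw [Finset.sum_congr rfl hXmon]
    rw [hf1, hf0, Finset.sum_filter_add_sum_filter_not]
    exact P.as_sum
  · intro d hd
    rcases Finset.mem_biUnion.mp (MvPolynomial.support_sum hd) with ⟨e, he, hde⟩
    have := Finset.mem_singleton.mp (MvPolynomial.support_monomial_subset hde)
    rw [this]
    exact Finsupp.erase_same
  · intro d hd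
    rcases Finset.mem_biUnion.mp (MvPolynomial.support_sum hd) with ⟨e, he, hde⟩
    have hdeq := Finset.mem_singleton.mp (MvPolynomial.support_monomial_subset hde)
    rw [hdeq]
    have hmem := Finset.mem_filter.mp he
    have := hsplit e hmem.1
    have := hmem.2
    omega
  · -- top coefficient of Lam
    rw [hLam, MvPolynomial.coeff_sum]
    have hΔf1 : Δ ∈ f1 := by
      rw [hf1, Finset.mem_filter]
      exact ⟨MvPolynomial.mem_support_iff.mpr htop, hΔi⟩
    rw [Finset.sum_eq_single Δ]
    · rw [MvPolynomial.coeff_monomial, if_pos rfl]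
    · intro d hd hne
      rw [MvPolynomial.coeff_monomial, if_neg]
      intro hh
      apply hne
      have hdi : d i = 1 := (Finset.mem_filter.mp hd).2
      have : Finsupp.single i 1 + Finsupp.erase i d
          = Finsupp.single i 1 + Finsupp.erase i Δ := by rw [hh]
      rw [herase d hdi, herase Δ hΔi] at this
      exact this
    · intro h
      exact absurd hΔf1 h
  · intro d hd
    rcases Finset.mem_biUnion.mp (MvPolynomial.support_sum hd) with ⟨e, he, hde⟩
    have hdeq := Finset.mem_singleton.mp (MvPolynomial.support_monomial_subset hde)
    rw [hdeq]
    have hmem := Finset.mem_filter.mp he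
    have hle := hdom e hmem.1
    rw [Finsupp.le_def]
    intro l
    by_cases hl : l = i
    · rw [hl, Finsupp.erase_same, Finsupp.erase_same]
    · rw [Finsupp.erase_ne hl, Finsupp.erase_ne hl]
      exact Finsupp.le_def.mp hle l

/-- Recombination of a value at coordinate `i` with values elsewhere. -/
def recomb (i : Fin n) (x : K) (r : {l : Fin n // l ≠ i} → K) : Fin n → K :=
  fun l => if h : l = i then x else r ⟨l, h⟩

lemma recomb_self (i : Fin n) (x : K) (r : {l : Fin n // l ≠ i} → K) :
    recomb i x r i = x := dif_pos rfl

lemma recomb_ne (i : Fin n) (x : K) (r : {l : Fin n // l ≠ i} → K) (l : Fin n) (h : l ≠ i) :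
    recomb i x r l = r ⟨l, h⟩ := dif_neg h

lemma recomb_bijective (i : Fin n) :
    Function.Bijective (fun q : K × ({l : Fin n // l ≠ i} → K) => recomb i q.1 q.2) := by
  constructor
  · intro q q' h
    simp only at h
    have h1 : q.1 = q'.1 := by
      have h' := congrFun h i
      rwa [recomb_self, recomb_self] at h'
    have h2 : q.2 = q'.2 := by
      funext l
      have h' := congrFun h l.1
      rwa [recomb_ne _ _ _ _ l.2, recomb_ne _ _ _ _ l.2, Subtype.coe_eta] at h'
    exact Prod.ext h1 h2
  · intro u
    refine ⟨⟨u i, fun l => u l.1⟩, ?_⟩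
    simp only
    funext l
    by_cases h : l = i
    · rw [h, recomb_self]
    · rw [recomb_ne _ _ _ _ h]

lemma eval_eq_off (Q : MvPolynomial (Fin n) K) (i : Fin n)
    (hQ : ∀ d ∈ Q.support, d i = 0) (u v : Fin n → K)
    (huv : ∀ l, l ≠ i → u l = v l) : eval u Q = eval v Q := by
  rw [MvPolynomial.eval_eq, MvPolynomial.eval_eq]
  refine Finset.sum_congr rfl fun d hd => ?_
  congr 1
  refine Finset.prod_congr rfl fun l hl => ?_
  have hlne : l ≠ i := by
    intro h
    rw [h] at hl
    exact (Finsupp.mem_support_iff.mp hl) (hQ d hd)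
  rw [huv l hlne]

end DecompSec


section Core

variable {m : ℕ} {s : ℕ → ℕ → ℕ} {p : ℕ} [Fact p.Prime]

lemma exists_min (a : Fin m → ZMod p) (ha : a ≠ 0) :
    ∃ j₀ : Fin m, a j₀ ≠ 0 ∧ ∀ j, j < j₀ → a j = 0 := by
  have hne : (Finset.univ.filter fun j : Fin m => a j ≠ 0).Nonempty := by
    by_contra h
    rw [Finset.not_nonempty_iff_eq_empty, Finset.filter_eq_empty_iff] at h
    apply ha
    funext j
    have := h (Finset.mem_univ j)
    simpa using this
  refine ⟨(Finset.univ.filter fun j : Fin m => a j ≠ 0).min' hne, ?_, ?_⟩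
  · exact (Finset.mem_filter.mp (Finset.min'_mem _ hne)).2
  · intro j hj
    by_contra h
    have hjmem : j ∈ Finset.univ.filter fun j : Fin m => a j ≠ 0 :=
      Finset.mem_filter.mpr ⟨Finset.mem_univ j, h⟩
    exact absurd (Finset.min'_le _ j hjmem) (not_le.mpr hj)

lemma core_bound (hs1 : ∀ i, i < m → 1 ≤ s i (i + 1))
    (Gs : ℕ → Fin (m + 1) → MvPolynomial (Fin (m + 1)) (ZMod p))
    (hsys : ∀ k, 1 ≤ k → IsFSystem m s (Gs k))
    (k : ℕ) (hk : 1 ≤ k) (a : Fin m → ZMod p) (ha : a ≠ 0) :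
    ‖∑ u : Fin (m + 1) → ZMod p,
        eP p (∑ j : Fin m,
          a j * (eval u (iterSys m Gs k j.castSucc) - u j.castSucc))‖
      ≤ (((Bc m s * (k + 1)) ^ m : ℕ) : ℝ) * (p : ℝ) ^ m := by
  classical
  haveI : NeZero p := ⟨(Fact.out : p.Prime).ne_zero⟩
  have hp0 : 0 < p := (Fact.out : p.Prime).pos
  obtain ⟨j₀, hj₀, hmin⟩ := exists_min a ha
  set i : Fin (m + 1) := j₀.castSucc with hi
  have him : i.val < m := by
    rw [hi, Fin.coe_castSucc]
    exact j₀.isLt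
  set P := iterSys m Gs k i with hP
  set Δ := DeltaF m s k i with hΔ
  obtain ⟨hdom, htop⟩ := iter_dom_top Gs hsys k i
  have hΔi : Δ i = 1 := DeltaF_diag m s k i
  obtain ⟨Lam, Mq, hPdec, hLam0, hM0, hLamtop, hLamdom⟩ :=
    linear_decomp P Δ i hdom hΔi htop
  set Q := Lam - C 1 with hQ
  set l1 : Fin (m + 1) := ⟨i.val + 1, by omega⟩ with hl1
  have hl1i : l1 ≠ i := by
    intro h
    have := congrArg Fin.val h
    simp [hl1] at this
  have hgrow : k ≤ Δ l1 := DeltaF_growth m s hs1 i him k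
  have hδl1 : (Finsupp.erase i Δ) l1 ≠ 0 := by
    rw [Finsupp.erase_ne hl1i]
    omega
  have hδne : (0 : Fin (m + 1) →₀ ℕ) ≠ Finsupp.erase i Δ := by
    intro h
    apply hδl1
    rw [← h]
    rfl
  have hδQ : coeff (Finsupp.erase i Δ) Q = coeff Δ P := by
    rw [hQ, MvPolynomial.coeff_sub, MvPolynomial.coeff_C, if_neg hδne, sub_zero, hLamtop]
  have hQne : Q ≠ 0 := by
    intro h
    rw [h, MvPolynomial.coeff_zero] at hδQ
    exact htop hδQ.symm
  have hQ0 : ∀ d ∈ Q.support, d i = 0 := by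
    intro d hd
    rcases Finset.mem_union.mp (MvPolynomial.support_sub _ _ _ hd) with h | h
    · exact hLam0 d h
    · have hd0 : d = 0 := Finset.mem_singleton.mp
        (MvPolynomial.support_monomial_subset (by rwa [MvPolynomial.C_apply] at h))
      rw [hd0]
      rfl
  have hQdom : Dom Q Δ := by
    intro d hd
    rcases Finset.mem_union.mp (MvPolynomial.support_sub _ _ _ hd) with h | h
    · refine le_trans (hLamdom d h) ?_
      rw [Finsupp.le_def]
      intro l
      by_cases hl : l = i
      · rw [hl, Finsupp.erase_same]
        exact Nat.zero_le _
      · rw [Finsupp.erase_ne hl]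
    · have hd0 : d = 0 := Finset.mem_singleton.mp
        (MvPolynomial.support_monomial_subset (by rwa [MvPolynomial.C_apply] at h))
      rw [hd0]
      exact zero_le
  have hQdeg : Q.totalDegree ≤ (Bc m s * (k + 1)) ^ m :=
    le_trans (totalDegree_le_of_dom hQdom) (DeltaF_size' m s k i)
  -- notation
  set ψ : (Fin (m + 1) → ZMod p) → ZMod p := fun u =>
    ∑ j : Fin m, a j * (eval u (iterSys m Gs k j.castSucc) - u j.castSucc) with hψ
  -- the key linearization
  have keylin : ∀ (x : ZMod p) (r : {l : Fin (m + 1) // l ≠ i} → ZMod p),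
      ψ (recomb i x r) = a j₀ * (eval (recomb i (0 : ZMod p) r) Lam - 1) * x
        + ψ (recomb i (0 : ZMod p) r) := by
    intro x r
    set ux := recomb i x r with hux
    set u0 := recomb i (0 : ZMod p) r with hu0
    have hoff : ∀ l, l ≠ i → ux l = u0 l := by
      intro l hl
      rw [hux, hu0, recomb_ne _ _ _ _ hl, recomb_ne _ _ _ _ hl]
    have termeq : ∀ j : Fin m,
        a j * (eval ux (iterSys m Gs k j.castSucc) - ux j.castSucc)
          = (if j = j₀ then a j₀ * (eval u0 Lam - 1) * x else 0)
            + a j * (eval u0 (iterSys m Gs k j.castSucc) - u0 j.castSucc) := by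
      intro j
      by_cases hj : j = j₀
      · subst hj
        rw [if_pos rfl]
        have hext : eval ux P = x * eval u0 Lam + eval u0 Mq := by
          rw [hPdec]
          rw [map_add, map_mul, eval_X]
          have h1 : eval ux Lam = eval u0 Lam := eval_eq_off Lam i hLam0 ux u0 hoff
          have h2 : eval ux Mq = eval u0 Mq := eval_eq_off Mq i hM0 ux u0 hoff
          rw [h1, h2, hux, recomb_self]
        have hext0 : eval u0 P = eval u0 Mq := by
          rw [hPdec, map_add, map_mul, eval_X, hu0, recomb_self, zero_mul, zero_add]
        have hxi : ux i = x := by rw [hux, recomb_self]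
        have h0i : u0 i = 0 := by rw [hu0, recomb_self]
        rw [← hP, hext, hext0, hxi, h0i]
        ring
      · rw [if_neg hj, zero_add]
        have hcjne : j.castSucc ≠ i := by
          intro h
          exact hj (Fin.castSucc_injective m h)
        rcases lt_or_gt_of_ne hj with hlt | hgt
        · rw [hmin j hlt, zero_mul, zero_mul]
        · have hicj : i < j.castSucc := by
            rw [hi, Fin.lt_def]
            exact hgt
          have hsup : ∀ d ∈ (iterSys m Gs k j.castSucc).support, d i = 0 := by
            intro d hd
            have hle := Finsupp.le_def.mp ((iter_dom_top Gs hsys k j.castSucc).1 d hd) i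
            have h0 : DeltaF m s k j.castSucc i = 0 :=
              DeltaF_lt_eq_zero m s k j.castSucc i hicj
            omega
          rw [eval_eq_off _ i hsup ux u0 hoff, hoff j.castSucc hcjne]
    rw [hψ]
    simp only
    rw [Finset.sum_congr rfl (fun j _ => termeq j), Finset.sum_add_distrib]
    congr 1
    rw [Finset.sum_ite_eq' Finset.univ j₀ (fun _ => a j₀ * (eval u0 Lam - 1) * x),
      if_pos (Finset.mem_univ j₀)]
  -- reindex the sum
  have hreidx : ∑ u : Fin (m + 1) → ZMod p, eP p (ψ u)
      = ∑ r : {l : Fin (m + 1) // l ≠ i} → ZMod p, ∑ x : ZMod p,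
          eP p (ψ (recomb i x r)) := by
    calc ∑ u : Fin (m + 1) → ZMod p, eP p (ψ u)
        = ∑ q : (ZMod p) × ({l : Fin (m + 1) // l ≠ i} → ZMod p),
            eP p (ψ (recomb i q.1 q.2)) :=
          (Fintype.sum_bijective _ (recomb_bijective i)
            (fun q : (ZMod p) × ({l : Fin (m + 1) // l ≠ i} → ZMod p) =>
              eP p (ψ (recomb i q.1 q.2)))
            (fun u => eP p (ψ u)) (fun q => rfl)).symm
      _ = _ := Fintype.sum_prod_type_right
        (f := fun q : (ZMod p) × ({l : Fin (m + 1) // l ≠ i} → ZMod p) =>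
          eP p (ψ (recomb i q.1 q.2)))
  have hinner : ∀ r : {l : Fin (m + 1) // l ≠ i} → ZMod p,
      ∑ x : ZMod p, eP p (ψ (recomb i x r))
        = (if a j₀ * (eval (recomb i (0 : ZMod p) r) Lam - 1) = 0 then (p : ℂ) else 0)
            * eP p (ψ (recomb i (0 : ZMod p) r)) := by
    intro r
    have hterm : ∀ x : ZMod p, eP p (ψ (recomb i x r))
        = eP p ((a j₀ * (eval (recomb i (0 : ZMod p) r) Lam - 1)) * x)
            * eP p (ψ (recomb i (0 : ZMod p) r)) := by
      intro x
      rw [keylin x r, eP_add, mul_assoc]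
    rw [Finset.sum_congr rfl (fun x _ => hterm x), ← Finset.sum_mul,
      sum_eP_mul p (a j₀ * (eval (recomb i (0 : ZMod p) r) Lam - 1))]
  have hcnd : ∀ r : {l : Fin (m + 1) // l ≠ i} → ZMod p,
      (a j₀ * (eval (recomb i (0 : ZMod p) r) Lam - 1) = 0)
        ↔ eval (recomb i (0 : ZMod p) r) Q = 0 := by
    intro r
    rw [hQ, map_sub, eval_C]
    constructor
    · intro h
      rcases mul_eq_zero.mp h with h | h
      · exact absurd h hj₀
      · exact h
    · intro h
      rw [h, mul_zero]
  have hTle : ‖∑ u : Fin (m + 1) → ZMod p, eP p (ψ u)‖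
      ≤ ∑ r : {l : Fin (m + 1) // l ≠ i} → ZMod p,
          (if eval (recomb i (0 : ZMod p) r) Q = 0 then (p : ℝ) else 0) := by
    rw [hreidx]
    refine le_trans (norm_sum_le _ _) (Finset.sum_le_sum fun r _ => ?_)
    rw [hinner r, norm_mul, norm_eP, mul_one]
    by_cases h : a j₀ * (eval (recomb i (0 : ZMod p) r) Lam - 1) = 0
    · rw [if_pos h, if_pos ((hcnd r).mp h)]
      rw [Complex.norm_natCast]
    · rw [if_neg h, if_neg (fun hh => h ((hcnd r).mpr hh)), norm_zero]
  set R0 := Finset.univ.filter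
    (fun r : {l : Fin (m + 1) // l ≠ i} → ZMod p => eval (recomb i (0 : ZMod p) r) Q = 0)
    with hR0
  set Zf := Finset.univ.filter (fun v : Fin (m + 1) → ZMod p => eval v Q = 0) with hZf
  have hsumcount : ∑ r : {l : Fin (m + 1) // l ≠ i} → ZMod p,
      (if eval (recomb i (0 : ZMod p) r) Q = 0 then (p : ℝ) else 0)
        = (R0.card : ℝ) * p := by
    rw [Finset.sum_ite, Finset.sum_const, Finset.sum_const_zero, add_zero, nsmul_eq_mul,
      hR0]
  have hinjcard : R0.card * p ≤ Zf.card := by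
    have hcard : ((Finset.univ : Finset (ZMod p)) ×ˢ R0).card = p * R0.card := by
      rw [Finset.card_product, Finset.card_univ, ZMod.card]
    have hle : ((Finset.univ : Finset (ZMod p)) ×ˢ R0).card ≤ Zf.card := by
      apply Finset.card_le_card_of_injOn (fun q => recomb i q.1 q.2)
      · intro q hq
        rcases Finset.mem_product.mp hq with ⟨_, hq2⟩
        have hq0 : eval (recomb i (0 : ZMod p) q.2) Q = 0 :=
          (Finset.mem_filter.mp hq2).2
        rw [hZf, Finset.mem_coe, Finset.mem_filter]
        refine ⟨Finset.mem_univ _, ?_⟩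
        rw [eval_eq_off Q i hQ0 (recomb i q.1 q.2) (recomb i (0 : ZMod p) q.2)
          (fun l hl => by rw [recomb_ne _ _ _ _ hl, recomb_ne _ _ _ _ hl])]
        exact hq0
      · exact Function.Injective.injOn (recomb_bijective i).1
    calc R0.card * p = ((Finset.univ : Finset (ZMod p)) ×ˢ R0).card := by
          rw [hcard, mul_comm]
      _ ≤ Zf.card := hle
  have hSZ := schwartz_zippel (m + 1) Q hQne
  rw [ZMod.card] at hSZ
  have hZfle : Zf.card ≤ (Bc m s * (k + 1)) ^ m * p ^ m := by
    have h1 : Zf.card * p ≤ ((Bc m s * (k + 1)) ^ m * p ^ m) * p := by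
      calc Zf.card * p ≤ Q.totalDegree * p ^ (m + 1) := hSZ
        _ ≤ (Bc m s * (k + 1)) ^ m * p ^ (m + 1) := Nat.mul_le_mul_right _ hQdeg
        _ = ((Bc m s * (k + 1)) ^ m * p ^ m) * p := by ring
    exact Nat.le_of_mul_le_mul_right h1 hp0
  calc ‖∑ u : Fin (m + 1) → ZMod p, eP p (ψ u)‖
      ≤ (R0.card : ℝ) * p := le_trans hTle (le_of_eq hsumcount)
    _ ≤ (Zf.card : ℝ) := by
        have : ((R0.card * p : ℕ) : ℝ) ≤ (Zf.card : ℝ) := Nat.cast_le.mpr hinjcard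
        push_cast at this
        linarith
    _ ≤ (((Bc m s * (k + 1)) ^ m * p ^ m : ℕ) : ℝ) := Nat.cast_le.mpr hZfle
    _ = (((Bc m s * (k + 1)) ^ m : ℕ) : ℝ) * (p : ℝ) ^ m := by push_cast; ring

end Core


section Pair

variable {m : ℕ} {s : ℕ → ℕ → ℕ} {p : ℕ} [Fact p.Prime]

lemma eval_bind {R : Type*} [CommSemiring R] {σ : Type*} (x : σ → R)
    (f : σ → MvPolynomial σ R) (φ : MvPolynomial σ R) :
    eval x (bind₁ f φ) = eval (fun j => eval x (f j)) φ := by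
  show eval₂Hom (RingHom.id R) x (bind₁ f φ) = _
  rw [MvPolynomial.eval₂Hom_bind₁]
  rfl

lemma iter_shift (Fs : ℕ → Fin (m + 1) → MvPolynomial (Fin (m + 1)) (ZMod p)) (n' : ℕ) :
    ∀ (k : ℕ) (i : Fin (m + 1)),
      iterSys m Fs (n' + k) i
        = bind₁ (iterSys m Fs n') (iterSys m (fun t => Fs (n' + t)) k i) := by
  intro k
  induction k with
  | zero =>
    intro i
    exact (MvPolynomial.bind₁_X_right (iterSys m Fs n') i).symm
  | succ k ih =>
    intro i
    have h1 : iterSys m Fs (n' + (k + 1)) i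
        = bind₁ (iterSys m Fs (n' + k)) (Fs (n' + k + 1) i) := rfl
    have h2 : iterSys m (fun t => Fs (n' + t)) (k + 1) i
        = bind₁ (iterSys m (fun t => Fs (n' + t)) k) (Fs (n' + (k + 1)) i) := rfl
    rw [h1, h2, MvPolynomial.bind₁_bind₁]
    have hfun : iterSys m Fs (n' + k)
        = fun j => bind₁ (iterSys m Fs n') (iterSys m (fun t => Fs (n' + t)) k j) :=
      funext ih
    rw [hfun]
    have h4 : n' + k + 1 = n' + (k + 1) := Nat.add_assoc n' k 1
    rw [h4]

/-- Evaluation map of the `k`-th iterate. -/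
noncomputable def evIter (Fs : ℕ → Fin (m + 1) → MvPolynomial (Fin (m + 1)) (ZMod p)) (k : ℕ) :
    (Fin (m + 1) → ZMod p) → (Fin (m + 1) → ZMod p) :=
  fun w i => eval w (iterSys m Fs k i)

lemma evIter_bij (Fs : ℕ → Fin (m + 1) → MvPolynomial (Fin (m + 1)) (ZMod p))
    (hbij : ∀ k, 1 ≤ k → Function.Bijective
      (fun w : Fin (m + 1) → ZMod p => fun i => eval w (Fs k i))) :
    ∀ k, Function.Bijective (evIter Fs k) := by
  intro k
  induction k with
  | zero =>
    have h : evIter Fs 0 = id := by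
      funext w i
      show eval w (X i) = w i
      rw [eval_X]
    rw [h]
    exact Function.bijective_id
  | succ k ih =>
    have hcomp : evIter Fs (k + 1)
        = (fun u : Fin (m + 1) → ZMod p => fun i => eval u (Fs (k + 1) i)) ∘ evIter Fs k := by
      funext w i
      show eval w (bind₁ (iterSys m Fs k) (Fs (k + 1) i)) = _
      rw [eval_bind]
      rfl
    rw [hcomp]
    exact Function.Bijective.comp (hbij (k + 1) (by omega)) ih

lemma pair_bound (hs1 : ∀ i, i < m → 1 ≤ s i (i + 1))
    (Fs : ℕ → Fin (m + 1) → MvPolynomial (Fin (m + 1)) (ZMod p))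
    (hsys : ∀ k, 1 ≤ k → IsFSystem m s (Fs k))
    (hbij : ∀ k, 1 ≤ k → Function.Bijective
      (fun w : Fin (m + 1) → ZMod p => fun i => eval w (Fs k i)))
    (a : Fin m → ZMod p) (ha : a ≠ 0) (n' n : ℕ) (hlt : n' < n) :
    ‖∑ w : Fin (m + 1) → ZMod p,
        eP p ((∑ j : Fin m, a j * eval w (iterSys m Fs n j.castSucc))
          - ∑ j : Fin m, a j * eval w (iterSys m Fs n' j.castSucc))‖
      ≤ (((Bc m s * ((n - n') + 1)) ^ m : ℕ) : ℝ) * (p : ℝ) ^ m := by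
  set k := n - n' with hkdef
  have hk : 1 ≤ k := by omega
  set Gs : ℕ → Fin (m + 1) → MvPolynomial (Fin (m + 1)) (ZMod p) :=
    fun t => Fs (n' + t) with hGs
  have hsys' : ∀ t, 1 ≤ t → IsFSystem m s (Gs t) := fun t ht => hsys (n' + t) (by omega)
  have hEq : ∀ w : Fin (m + 1) → ZMod p,
      (∑ j : Fin m, a j * eval w (iterSys m Fs n j.castSucc))
          - ∑ j : Fin m, a j * eval w (iterSys m Fs n' j.castSucc)
        = ∑ j : Fin m, a j * (eval (evIter Fs n' w) (iterSys m Gs k j.castSucc)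
            - (evIter Fs n' w) j.castSucc) := by
    intro w
    rw [← Finset.sum_sub_distrib]
    refine Finset.sum_congr rfl fun j _ => ?_
    have h1 : eval w (iterSys m Fs n j.castSucc)
        = eval (evIter Fs n' w) (iterSys m Gs k j.castSucc) := by
      have hn : n = n' + k := by omega
      rw [hn, iter_shift Fs n' k j.castSucc, eval_bind]
      rfl
    have h2 : eval w (iterSys m Fs n' j.castSucc) = (evIter Fs n' w) j.castSucc := rfl
    rw [h1, h2, mul_sub]
  have hre : ∑ w : Fin (m + 1) → ZMod p,
      eP p ((∑ j : Fin m, a j * eval w (iterSys m Fs n j.castSucc))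
        - ∑ j : Fin m, a j * eval w (iterSys m Fs n' j.castSucc))
      = ∑ u : Fin (m + 1) → ZMod p,
          eP p (∑ j : Fin m, a j * (eval u (iterSys m Gs k j.castSucc) - u j.castSucc)) := by
    rw [Finset.sum_congr rfl (fun w _ => congrArg (eP p) (hEq w))]
    exact Fintype.sum_bijective (evIter Fs n') (evIter_bij Fs hbij n') _ _ (fun w => rfl)
  rw [hre]
  exact core_bound hs1 Gs hsys' k hk a ha

end Pair


section Block

variable {m : ℕ} {s : ℕ → ℕ → ℕ} {p : ℕ} [Fact p.Prime]

lemma norm_sq_eq_re_mul_conj (z : ℂ) : ‖z‖ ^ 2 = (z * (starRingEnd ℂ) z).re := by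
  rw [Complex.mul_conj, Complex.ofReal_re, Complex.normSq_eq_norm_sq]

lemma block_bound (hs1 : ∀ i, i < m → 1 ≤ s i (i + 1))
    (Fs : ℕ → Fin (m + 1) → MvPolynomial (Fin (m + 1)) (ZMod p))
    (hsys : ∀ k, 1 ≤ k → IsFSystem m s (Fs k))
    (hbij : ∀ k, 1 ≤ k → Function.Bijective
      (fun w : Fin (m + 1) → ZMod p => fun i => eval w (Fs k i)))
    (a : Fin m → ZMod p) (ha : a ≠ 0) (L n₀ ℓ : ℕ) (hℓ : ℓ ≤ L)
    (γ : ℕ → ℂ) (hγ : ∀ nn, ‖γ nn‖ ≤ 1) :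
    ∑ w : Fin (m + 1) → ZMod p,
        ‖∑ nn ∈ Finset.Ico n₀ (n₀ + ℓ),
            eP p (∑ j : Fin m, a j * eval w (iterSys m Fs nn j.castSucc)) * γ nn‖ ^ 2
      ≤ (ℓ : ℝ) * (p : ℝ) ^ (m + 1)
        + (ℓ : ℝ) ^ 2 * ((((Bc m s * (L + 1)) ^ m : ℕ) : ℝ) * (p : ℝ) ^ m) := by
  classical
  haveI : NeZero p := ⟨(Fact.out : p.Prime).ne_zero⟩
  set ψ : ℕ → (Fin (m + 1) → ZMod p) → ZMod p :=
    fun nn w => ∑ j : Fin m, a j * eval w (iterSys m Fs nn j.castSucc) with hψ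
  set I := Finset.Ico n₀ (n₀ + ℓ) with hI
  have hIcard : I.card = ℓ := by rw [hI, Nat.card_Ico]; omega
  set S : ℕ → ℕ → ℂ := fun nn nn' => ∑ w : Fin (m + 1) → ZMod p, eP p (ψ nn w - ψ nn' w)
    with hS
  set D : ℝ := (((Bc m s * (L + 1)) ^ m : ℕ) : ℝ) * (p : ℝ) ^ m with hD
  have hD0 : 0 ≤ D := by positivity
  -- norms of S
  have hSdiag : ∀ nn, ‖S nn nn‖ = (p : ℝ) ^ (m + 1) := by
    intro nn
    have : S nn nn = ((p ^ (m + 1) : ℕ) : ℂ) := by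
      rw [hS]
      simp only [sub_self, eP_zero]
      rw [Finset.sum_const, Finset.card_univ, nsmul_eq_mul, mul_one]
      norm_cast
      rw [Fintype.card_fun, ZMod.card, Fintype.card_fin]
    rw [this, Complex.norm_natCast]
    push_cast
    ring
  have hSoff : ∀ nn ∈ I, ∀ nn' ∈ I, nn ≠ nn' → ‖S nn nn'‖ ≤ D := by
    intro nn hnn nn' hnn' hne
    have hIco : ∀ x ∈ I, n₀ ≤ x ∧ x < n₀ + ℓ := by
      intro x hx
      exact Finset.mem_Ico.mp hx
    have key : ∀ u v : ℕ, u ∈ I → v ∈ I → v < u → ‖S u v‖ ≤ D := by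
      intro u v hu hv hvu
      have hb := pair_bound hs1 Fs hsys hbij a ha v u hvu
      refine le_trans hb ?_
      rw [hD]
      apply mul_le_mul_of_nonneg_right _ (by positivity)
      have hnat : (Bc m s * ((u - v) + 1)) ^ m ≤ (Bc m s * (L + 1)) ^ m := by
        apply Nat.pow_le_pow_left
        apply Nat.mul_le_mul_left
        have h1 := hIco u hu
        have h2 := hIco v hv
        omega
      exact_mod_cast Nat.cast_le.mpr hnat
    rcases lt_or_gt_of_ne hne with hlt | hgt
    · -- nn < nn' : use conjugation symmetry
      have hconj : S nn nn' = (starRingEnd ℂ) (S nn' nn) := by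
        rw [hS]
        simp only
        rw [map_sum]
        refine Finset.sum_congr rfl fun w _ => ?_
        rw [conj_eP, neg_sub]
      rw [hconj, RCLike.norm_conj]
      exact key nn' nn hnn' hnn hlt
    · exact key nn nn' hnn hnn' hgt
  -- expansion
  have hexp : ∑ w : Fin (m + 1) → ZMod p,
      ‖∑ nn ∈ I, eP p (ψ nn w) * γ nn‖ ^ 2
        = (∑ nn ∈ I, ∑ nn' ∈ I, (γ nn * (starRingEnd ℂ) (γ nn')) * S nn nn').re := by
    have hpt : ∀ w : Fin (m + 1) → ZMod p,
        ‖∑ nn ∈ I, eP p (ψ nn w) * γ nn‖ ^ 2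
          = (∑ nn ∈ I, ∑ nn' ∈ I,
              (γ nn * (starRingEnd ℂ) (γ nn')) * eP p (ψ nn w - ψ nn' w)).re := by
      intro w
      rw [norm_sq_eq_re_mul_conj]
      congr 1
      rw [map_sum, Finset.sum_mul_sum]
      refine Finset.sum_congr rfl fun nn _ => Finset.sum_congr rfl fun nn' _ => ?_
      rw [map_mul]
      have := eP_mul_conj p (ψ nn w) (ψ nn' w)
      calc eP p (ψ nn w) * γ nn * ((starRingEnd ℂ) (eP p (ψ nn' w)) * (starRingEnd ℂ) (γ nn'))
          = (γ nn * (starRingEnd ℂ) (γ nn')) * (eP p (ψ nn w) * (starRingEnd ℂ) (eP p (ψ nn' w))) := by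
            ring
        _ = (γ nn * (starRingEnd ℂ) (γ nn')) * eP p (ψ nn w - ψ nn' w) := by rw [this]
    rw [Finset.sum_congr rfl (fun w _ => hpt w), ← Complex.re_sum]
    congr 1
    rw [Finset.sum_comm]
    refine Finset.sum_congr rfl fun nn _ => ?_
    rw [Finset.sum_comm]
    refine Finset.sum_congr rfl fun nn' _ => ?_
    rw [← Finset.mul_sum]
  rw [hexp]
  -- bound the real part by the sum of norms
  have hbound1 : (∑ nn ∈ I, ∑ nn' ∈ I, (γ nn * (starRingEnd ℂ) (γ nn')) * S nn nn').re
      ≤ ∑ nn ∈ I, ∑ nn' ∈ I, ‖S nn nn'‖ := by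
    refine le_trans (Complex.re_le_norm _) ?_
    refine le_trans (norm_sum_le _ _) (Finset.sum_le_sum fun nn _ => ?_)
    refine le_trans (norm_sum_le _ _) (Finset.sum_le_sum fun nn' _ => ?_)
    rw [norm_mul, norm_mul, RCLike.norm_conj]
    calc ‖γ nn‖ * ‖γ nn'‖ * ‖S nn nn'‖ ≤ 1 * 1 * ‖S nn nn'‖ := by
          apply mul_le_mul_of_nonneg_right _ (norm_nonneg _)
          exact mul_le_mul (hγ nn) (hγ nn') (norm_nonneg _) zero_le_one
      _ = ‖S nn nn'‖ := by ring
  refine le_trans hbound1 ?_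
  -- count diagonal and off-diagonal terms
  have hinner : ∀ nn ∈ I, ∑ nn' ∈ I, ‖S nn nn'‖ ≤ (p : ℝ) ^ (m + 1) + (ℓ : ℝ) * D := by
    intro nn hnn
    rw [← Finset.add_sum_erase _ _ hnn]
    have h1 : ‖S nn nn‖ = (p : ℝ) ^ (m + 1) := hSdiag nn
    have h2 : ∑ nn' ∈ I.erase nn, ‖S nn nn'‖ ≤ (ℓ : ℝ) * D := by
      calc ∑ nn' ∈ I.erase nn, ‖S nn nn'‖
          ≤ (I.erase nn).card • D := Finset.sum_le_card_nsmul _ _ _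
            (fun nn' hnn' => hSoff nn hnn nn' (Finset.mem_of_mem_erase hnn')
              (Ne.symm (Finset.ne_of_mem_erase hnn')))
        _ = ((I.erase nn).card : ℝ) * D := nsmul_eq_mul _ _
        _ ≤ (ℓ : ℝ) * D := by
            apply mul_le_mul_of_nonneg_right _ hD0
            have : (I.erase nn).card ≤ I.card := Finset.card_erase_le
            rw [hIcard] at this
            exact_mod_cast this
    rw [h1]
    linarith
  calc ∑ nn ∈ I, ∑ nn' ∈ I, ‖S nn nn'‖
      ≤ ∑ nn ∈ I, ((p : ℝ) ^ (m + 1) + (ℓ : ℝ) * D) := Finset.sum_le_sum hinner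
    _ = (I.card : ℝ) * ((p : ℝ) ^ (m + 1) + (ℓ : ℝ) * D) := by
        rw [Finset.sum_const, nsmul_eq_mul]
    _ = (ℓ : ℝ) * (p : ℝ) ^ (m + 1) + (ℓ : ℝ) ^ 2 * D := by
        rw [hIcard]
        ring

end Block


section Final

lemma sum_range_mul_partition {β : Type*} [AddCommMonoid β] (f : ℕ → β) (K L : ℕ) :
    ∑ n ∈ Finset.range (K * L), f n
      = ∑ b ∈ Finset.range K, ∑ n ∈ Finset.Ico (b * L) (b * L + L), f n := by
  induction K with
  | zero => simp
  | succ K ih =>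
    rw [Finset.sum_range_succ, ← ih, Nat.succ_mul, Finset.range_eq_Ico,
      ← Finset.sum_Ico_consecutive f (Nat.zero_le (K * L)) (Nat.le_add_right (K * L) L),
      ← Finset.range_eq_Ico]

end Final

end Stmt7Proof

set_option maxHeartbeats 1000000 in
open Stmt7Proof in
theorem stmt7 (m : ℕ) (hm : 1 ≤ m) (s : ℕ → ℕ → ℕ) :
    ∃ c₀ : ℝ, 0 < c₀ ∧
      ∀ (p : ℕ) [Fact p.Prime],
        ∀ Fs : ℕ → Fin (m + 1) → MvPolynomial (Fin (m + 1)) (ZMod p),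
          (∀ k, 1 ≤ k → IsFSystem m s (Fs k)) →
          (∀ k, 1 ≤ k → Function.Bijective
            (fun w : Fin (m + 1) → ZMod p => fun i => MvPolynomial.eval w (Fs k i))) →
          (∏ i ∈ Finset.range m, s i (i + 1)) ≠ 0 →
          ∀ c M N : ℕ, 0 < c → 0 < M → 0 < N →
            ∀ a : Fin m → ZMod p, a ≠ 0 →
              (∑ w : Fin (m + 1) → ZMod p,
                  ‖∑ n ∈ Finset.range N,
                      eP p (∑ j : Fin m,
                          a j * MvPolynomial.eval w (iterSys m Fs n j.castSucc)) *
                        eM M (c * n)‖ ^ 2) ≤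
                c₀ * (if (N : ℝ) ≤ (p : ℝ) ^ ((1 : ℝ) / ((m : ℝ) + 1))
                  then (N : ℝ) * (p : ℝ) ^ ((m : ℝ) + 1)
                  else (N : ℝ) ^ 2 *
                    (p : ℝ) ^ (((m : ℝ) * ((m : ℝ) + 2)) / ((m : ℝ) + 1))) := by
  classical
  set C1 : ℕ := (2 * Bc m s) ^ m with hC1
  refine ⟨8 * (1 + (C1 : ℝ)), by positivity, ?_⟩
  intro p instp Fs hsys hbij hprod c M N hc hM hN a ha
  have hs1 : ∀ i, i < m → 1 ≤ s i (i + 1) := by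
    intro i hi
    have := Finset.prod_ne_zero_iff.mp hprod i (Finset.mem_range.mpr hi)
    omega
  have hp2 : 2 ≤ p := (Fact.out : p.Prime).two_le
  have hp0 : (0 : ℝ) < p := by
    have : (0 : ℕ) < p := by omega
    exact_mod_cast this
  have hp1 : (1 : ℝ) ≤ p := by
    have : (1 : ℕ) ≤ p := by omega
    exact_mod_cast this
  set X := (p : ℝ) ^ ((1 : ℝ) / ((m : ℝ) + 1)) with hX
  have hm1pos : (0 : ℝ) < (m : ℝ) + 1 := by positivity
  have hX1 : 1 ≤ X := Real.one_le_rpow hp1 (by positivity)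
  have hX0 : 0 < X := lt_of_lt_of_le one_pos hX1
  have hXpow : X ^ (m + 1) = (p : ℝ) := by
    rw [hX, ← Real.rpow_natCast ((p : ℝ) ^ ((1 : ℝ) / ((m : ℝ) + 1))) (m + 1),
      ← Real.rpow_mul (le_of_lt hp0)]
    rw [show (1 : ℝ) / ((m : ℝ) + 1) * (((m + 1 : ℕ) : ℝ)) = 1 by
      push_cast
      field_simp]
    exact Real.rpow_one _
  set L := min N (max 1 (Nat.floor X)) with hL
  have hL1 : 1 ≤ L := le_min hN (le_max_left 1 _)
  have hL0 : (0 : ℝ) < L := by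
    have : (0 : ℕ) < L := hL1
    exact_mod_cast this
  have hLN : L ≤ N := min_le_left _ _
  have hfloor1 : 1 ≤ Nat.floor X := Nat.le_floor (by exact_mod_cast hX1)
  have hmaxfloor : max 1 (Nat.floor X) = Nat.floor X := max_eq_right hfloor1
  have hLX : (L : ℝ) ≤ X := by
    have h1 : L ≤ Nat.floor X := le_trans (min_le_right _ _) (le_of_eq hmaxfloor)
    calc (L : ℝ) ≤ (Nat.floor X : ℝ) := by exact_mod_cast h1
      _ ≤ X := Nat.floor_le (le_of_lt hX0)
  have hLpow : (L : ℝ) ^ (m + 1) ≤ (p : ℝ) := by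
    rw [← hXpow]
    exact pow_le_pow_left₀ (by positivity) hLX (m + 1)
  set K := N / L + 1 with hK
  have hK1 : 1 ≤ K := by
    rw [hK]
    exact Nat.le_add_left 1 (N / L)
  have hNKL : N ≤ K * L := by
    have h2 : N % L < L := Nat.mod_lt N (by omega)
    calc N = L * (N / L) + N % L := (Nat.div_add_mod N L).symm
      _ ≤ L * (N / L) + L := Nat.add_le_add_left (le_of_lt h2) _
      _ = (N / L + 1) * L := by ring
      _ = K * L := by rw [hK]
  set P1 := (p : ℝ) ^ (m + 1) with hP1
  have hP1pos : 0 < P1 := by positivity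
  set γ : ℕ → ℂ := fun nn => if nn < N then eM M (c * nn) else 0 with hγdef
  have hγval : ∀ n, n < N → γ n = eM M (c * n) := by
    intro n h
    simp only [hγdef]
    rw [if_pos h]
  have hγ0 : ∀ n, ¬ n < N → γ n = 0 := by
    intro n h
    simp only [hγdef]
    rw [if_neg h]
  have hγ : ∀ nn, ‖γ nn‖ ≤ 1 := by
    intro nn
    by_cases h : nn < N
    · rw [hγval nn h, norm_eM]
    · rw [hγ0 nn h, norm_zero]
      exact zero_le_one
  set ψ : ℕ → (Fin (m + 1) → ZMod p) → ZMod p :=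
    fun nn w => ∑ j : Fin m, a j * MvPolynomial.eval w (iterSys m Fs nn j.castSucc) with hψ
  -- step 1: replace eM by γ and extend the range
  have hsum_ext : ∀ w : Fin (m + 1) → ZMod p,
      ∑ n ∈ Finset.range N, eP p (ψ n w) * eM M (c * n)
        = ∑ n ∈ Finset.range (K * L), eP p (ψ n w) * γ n := by
    intro w
    calc ∑ n ∈ Finset.range N, eP p (ψ n w) * eM M (c * n)
        = ∑ n ∈ Finset.range N, eP p (ψ n w) * γ n := by
          refine Finset.sum_congr rfl fun n hn => ?_
          rw [hγval n (Finset.mem_range.mp hn)]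
      _ = ∑ n ∈ Finset.range (K * L), eP p (ψ n w) * γ n := by
          refine Finset.sum_subset (Finset.range_subset_range.mpr hNKL) fun x _ hnx => ?_
          rw [hγ0 x (by simpa using hnx), mul_zero]
  -- step 2: partition into blocks and apply Cauchy-Schwarz pointwise
  have hcauchy : ∀ w : Fin (m + 1) → ZMod p,
      ‖∑ n ∈ Finset.range (K * L), eP p (ψ n w) * γ n‖ ^ 2
        ≤ (K : ℝ) * ∑ b ∈ Finset.range K,
            ‖∑ n ∈ Finset.Ico (b * L) (b * L + L), eP p (ψ n w) * γ n‖ ^ 2 := by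
    intro w
    rw [sum_range_mul_partition (fun n => eP p (ψ n w) * γ n) K L]
    calc ‖∑ b ∈ Finset.range K, ∑ n ∈ Finset.Ico (b * L) (b * L + L), eP p (ψ n w) * γ n‖ ^ 2
        ≤ (∑ b ∈ Finset.range K,
            ‖∑ n ∈ Finset.Ico (b * L) (b * L + L), eP p (ψ n w) * γ n‖) ^ 2 :=
          pow_le_pow_left₀ (norm_nonneg _) (norm_sum_le _ _) 2
      _ ≤ ((Finset.range K).card : ℝ) * ∑ b ∈ Finset.range K,
            ‖∑ n ∈ Finset.Ico (b * L) (b * L + L), eP p (ψ n w) * γ n‖ ^ 2 :=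
          sq_sum_le_card_mul_sum_sq
      _ = (K : ℝ) * ∑ b ∈ Finset.range K,
            ‖∑ n ∈ Finset.Ico (b * L) (b * L + L), eP p (ψ n w) * γ n‖ ^ 2 := by
          rw [Finset.card_range]
  -- step 3: apply the per-block bound
  set DL : ℝ := (((Bc m s * (L + 1)) ^ m : ℕ) : ℝ) * (p : ℝ) ^ m with hDL
  have hblock : ∀ b : ℕ,
      ∑ w : Fin (m + 1) → ZMod p,
        ‖∑ n ∈ Finset.Ico (b * L) (b * L + L), eP p (ψ n w) * γ n‖ ^ 2
        ≤ (L : ℝ) * P1 + (L : ℝ) ^ 2 * DL := by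
    intro b
    exact block_bound hs1 Fs hsys hbij a ha L (b * L) L (le_refl L) γ hγ
  -- combine
  have hmain : ∑ w : Fin (m + 1) → ZMod p,
      ‖∑ n ∈ Finset.range N, eP p (ψ n w) * eM M (c * n)‖ ^ 2
        ≤ (K : ℝ) ^ 2 * ((L : ℝ) * P1 + (L : ℝ) ^ 2 * DL) := by
    calc ∑ w : Fin (m + 1) → ZMod p,
          ‖∑ n ∈ Finset.range N, eP p (ψ n w) * eM M (c * n)‖ ^ 2
        = ∑ w : Fin (m + 1) → ZMod p,
            ‖∑ n ∈ Finset.range (K * L), eP p (ψ n w) * γ n‖ ^ 2 := by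
          refine Finset.sum_congr rfl fun w _ => ?_
          rw [hsum_ext w]
      _ ≤ ∑ w : Fin (m + 1) → ZMod p, (K : ℝ) * ∑ b ∈ Finset.range K,
            ‖∑ n ∈ Finset.Ico (b * L) (b * L + L), eP p (ψ n w) * γ n‖ ^ 2 :=
          Finset.sum_le_sum fun w _ => hcauchy w
      _ = (K : ℝ) * ∑ b ∈ Finset.range K, ∑ w : Fin (m + 1) → ZMod p,
            ‖∑ n ∈ Finset.Ico (b * L) (b * L + L), eP p (ψ n w) * γ n‖ ^ 2 := by
          rw [← Finset.mul_sum, Finset.sum_comm]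
      _ ≤ (K : ℝ) * ∑ b ∈ Finset.range K, ((L : ℝ) * P1 + (L : ℝ) ^ 2 * DL) := by
          apply mul_le_mul_of_nonneg_left _ (by positivity)
          exact Finset.sum_le_sum fun b _ => hblock b
      _ = (K : ℝ) ^ 2 * ((L : ℝ) * P1 + (L : ℝ) ^ 2 * DL) := by
          rw [Finset.sum_const, Finset.card_range, nsmul_eq_mul]
          ring
  -- numeric bound for the block term
  have hDLle : DL ≤ (C1 : ℝ) * (L : ℝ) ^ m * (p : ℝ) ^ m := by
    rw [hDL, hC1]
    apply mul_le_mul_of_nonneg_right _ (by positivity)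
    have hnat : (Bc m s * (L + 1)) ^ m ≤ (2 * Bc m s) ^ m * L ^ m := by
      rw [← Nat.mul_pow]
      apply Nat.pow_le_pow_left
      calc Bc m s * (L + 1) ≤ Bc m s * (2 * L) :=
            Nat.mul_le_mul (le_refl _) (by omega)
        _ = 2 * Bc m s * L := by ring
    calc (((Bc m s * (L + 1)) ^ m : ℕ) : ℝ)
        ≤ (((2 * Bc m s) ^ m * L ^ m : ℕ) : ℝ) := by exact_mod_cast hnat
      _ = ((2 * Bc m s) ^ m : ℕ) * (L : ℝ) ^ m := by push_cast; ring
  have hterm : (L : ℝ) * P1 + (L : ℝ) ^ 2 * DL ≤ (1 + (C1 : ℝ)) * ((L : ℝ) * P1) := by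
    have h2 : (L : ℝ) ^ 2 * DL ≤ (C1 : ℝ) * ((L : ℝ) * P1) := by
      calc (L : ℝ) ^ 2 * DL ≤ (L : ℝ) ^ 2 * ((C1 : ℝ) * (L : ℝ) ^ m * (p : ℝ) ^ m) := by
            apply mul_le_mul_of_nonneg_left hDLle (by positivity)
        _ = (C1 : ℝ) * (L : ℝ) * ((L : ℝ) ^ (m + 1) * (p : ℝ) ^ m) := by ring
        _ ≤ (C1 : ℝ) * (L : ℝ) * ((p : ℝ) * (p : ℝ) ^ m) := by
            apply mul_le_mul_of_nonneg_left _ (by positivity)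
            apply mul_le_mul_of_nonneg_right hLpow (by positivity)
        _ = (C1 : ℝ) * ((L : ℝ) * P1) := by
            rw [hP1, pow_succ']
            ring
    linarith
  have hmain2 : ∑ w : Fin (m + 1) → ZMod p,
      ‖∑ n ∈ Finset.range N, eP p (ψ n w) * eM M (c * n)‖ ^ 2
        ≤ (K : ℝ) ^ 2 * ((1 + (C1 : ℝ)) * ((L : ℝ) * P1)) :=
    le_trans hmain (mul_le_mul_of_nonneg_left hterm (by positivity))
  -- case split
  by_cases hcase : (N : ℝ) ≤ X
  · rw [if_pos hcase]
    have hLeqN : L = N := by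
      rw [hL]
      apply min_eq_left
      refine le_trans (Nat.le_floor (by exact_mod_cast hcase)) (le_max_right 1 _)
    have hKeq : K = 2 := by
      rw [hK, hLeqN, Nat.div_self (by omega : 0 < N)]
    have hrp : (p : ℝ) ^ ((m : ℝ) + 1) = P1 := by
      rw [hP1, ← Real.rpow_natCast (p : ℝ) (m + 1)]
      congr 1
      push_cast
      ring
    rw [hrp]
    refine le_trans hmain2 ?_
    rw [hKeq, hLeqN]
    have hNP : (0 : ℝ) ≤ (N : ℝ) * P1 := by positivity
    have hC10 : (0 : ℝ) ≤ (C1 : ℝ) := by positivity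
    push_cast
    nlinarith
  · rw [if_neg hcase]
    push_neg at hcase
    have hLeq : L = max 1 (Nat.floor X) := by
      rw [hL]
      apply min_eq_right
      rw [hmaxfloor]
      have : (Nat.floor X : ℝ) < N := lt_of_le_of_lt (Nat.floor_le (le_of_lt hX0)) hcase
      have := Nat.cast_lt.mp this
      omega
    have hX2L : X ≤ 2 * (L : ℝ) := by
      by_cases hX2 : X ≤ 2
      · calc X ≤ 2 := hX2
          _ ≤ 2 * (L : ℝ) := by
            have : (1 : ℝ) ≤ (L : ℝ) := by exact_mod_cast hL1
            nlinarith
      · push_neg at hX2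
        have hfl : X - 1 < (Nat.floor X : ℝ) := Nat.sub_one_lt_floor X
        have hLfl' : Nat.floor X ≤ L := by
          have hmr := le_max_right 1 (Nat.floor X)
          rw [← hLeq] at hmr
          exact hmr
        have hLfl : (Nat.floor X : ℝ) ≤ (L : ℝ) := by exact_mod_cast hLfl' 
        nlinarith
    have hKle : (K : ℝ) ≤ 2 * (N : ℝ) / (L : ℝ) := by
      have h1 : 1 ≤ N / L := (Nat.one_le_div_iff (by omega)).mpr hLN
      have h2 : K ≤ 2 * (N / L) := by
        rw [hK]
        generalize N / L = q at h1 ⊢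
        omega
      have h3 : ((N / L : ℕ) : ℝ) ≤ (N : ℝ) / (L : ℝ) := Nat.cast_div_le
      calc (K : ℝ) ≤ ((2 * (N / L) : ℕ) : ℝ) := by exact_mod_cast h2
        _ = 2 * ((N / L : ℕ) : ℝ) := by push_cast; ring
        _ ≤ 2 * ((N : ℝ) / (L : ℝ)) := by linarith
        _ = 2 * (N : ℝ) / (L : ℝ) := by ring
    have hrpow : P1 / X = (p : ℝ) ^ (((m : ℝ) * ((m : ℝ) + 2)) / ((m : ℝ) + 1)) := by
      rw [hP1, hX, ← Real.rpow_natCast (p : ℝ) (m + 1), ← Real.rpow_sub hp0]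
      congr 1
      push_cast
      field_simp
      ring
    refine le_trans hmain2 ?_
    have hK0 : (0 : ℝ) ≤ (K : ℝ) := by positivity
    have hstep1 : (K : ℝ) ^ 2 * ((1 + (C1 : ℝ)) * ((L : ℝ) * P1))
        ≤ (2 * (N : ℝ) / (L : ℝ)) ^ 2 * ((1 + (C1 : ℝ)) * ((L : ℝ) * P1)) := by
      apply mul_le_mul_of_nonneg_right _ (by positivity)
      exact pow_le_pow_left₀ hK0 hKle 2
    have hstep2 : (2 * (N : ℝ) / (L : ℝ)) ^ 2 * ((1 + (C1 : ℝ)) * ((L : ℝ) * P1))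
        = 4 * (N : ℝ) ^ 2 * (1 + (C1 : ℝ)) * P1 * (1 / (L : ℝ)) := by
      field_simp
      ring
    have hstep3 : (1 : ℝ) / (L : ℝ) ≤ 2 / X := by
      rw [div_le_div_iff₀ hL0 hX0]
      linarith
    have hstep4 : 4 * (N : ℝ) ^ 2 * (1 + (C1 : ℝ)) * P1 * (1 / (L : ℝ))
        ≤ 4 * (N : ℝ) ^ 2 * (1 + (C1 : ℝ)) * P1 * (2 / X) := by
      apply mul_le_mul_of_nonneg_left hstep3 (by positivity)
    have hstep5 : 4 * (N : ℝ) ^ 2 * (1 + (C1 : ℝ)) * P1 * (2 / X)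
        = 8 * (1 + (C1 : ℝ)) * ((N : ℝ) ^ 2 * (P1 / X)) := by
      ring
    rw [hrpow] at hstep5
    calc (K : ℝ) ^ 2 * ((1 + (C1 : ℝ)) * ((L : ℝ) * P1))
        ≤ (2 * (N : ℝ) / (L : ℝ)) ^ 2 * ((1 + (C1 : ℝ)) * ((L : ℝ) * P1)) := hstep1
      _ = 4 * (N : ℝ) ^ 2 * (1 + (C1 : ℝ)) * P1 * (1 / (L : ℝ)) := hstep2
      _ ≤ 4 * (N : ℝ) ^ 2 * (1 + (C1 : ℝ)) * P1 * (2 / X) := hstep4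
      _ = 8 * (1 + (C1 : ℝ)) *
          ((N : ℝ) ^ 2 * (p : ℝ) ^ (((m : ℝ) * ((m : ℝ) + 2)) / ((m : ℝ) + 1))) := hstep5
end
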